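/- arXiv:1702.01203 — 9 statements merged into one kernel-verified Lean document; each statement's English description precedes it below -/
import Mathlib

section
/- Let (μ_n)_{n≥1} be a proper super-convolutive sequence with g_n(t) = (1/n) log ∑_j μ_n(j)e^{jt}, limit function Λ(t) = lim_n g_n(t), and γ = Λ(0) < ∞. Then g_1(t) ≤ Λ(t) ≤ max(γ, t + γ) for all real t, and Λ is convex and monotonically nondecreasing. -/
open Filter
open scoped Topology BigOperators

section Aux

variable (μ : ℕ → ℕ → ℝ)

/-- The partition-function sum. -/
noncomputable def auxS (n : ℕ) (t : ℝ) : ℝ :=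
  ∑ j ∈ Finset.range (n + 1), μ n j * Real.exp (j * t)

lemma auxS_pos (hnonneg : ∀ n i, 0 ≤ μ n i) (hpos0 : ∀ n : ℕ, 1 ≤ n → 0 < μ n 0)
    (n : ℕ) (hn : 1 ≤ n) (t : ℝ) : 0 < auxS μ n t := by
  apply Finset.sum_pos'
  · intro i _
    exact mul_nonneg (hnonneg n i) (Real.exp_pos _).le
  · exact ⟨0, Finset.mem_range.2 (by omega), mul_pos (hpos0 n hn) (Real.exp_pos _)⟩

lemma auxS_supermul (hnonneg : ∀ n i, 0 ≤ μ n i)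
    (hzero : ∀ n i : ℕ, n + 1 ≤ i → μ n i = 0)
    (hsup : ∀ m n : ℕ, 1 ≤ m → 1 ≤ n → ∀ i : ℕ,
      ∑ k ∈ Finset.range (i + 1), μ m k * μ n (i - k) ≤ μ (m + n) i)
    (m n : ℕ) (hm : 1 ≤ m) (hn : 1 ≤ n) (t : ℝ) :
    auxS μ m t * auxS μ n t ≤ auxS μ (m + n) t := by
  classical
  set N := m + n + 1 with hN
  set f : ℕ → ℝ := fun p => μ m p * Real.exp (p * t) with hf
  set g : ℕ → ℝ := fun q => μ n q * Real.exp (q * t) with hgdef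
  have hfz : ∀ p, m + 1 ≤ p → f p = 0 := fun p hp => by simp [hf, hzero m p hp]
  have hgz : ∀ q, n + 1 ≤ q → g q = 0 := fun q hq => by simp [hgdef, hzero n q hq]
  -- extend the sums to range N
  have hSm : auxS μ m t = ∑ p ∈ Finset.range N, f p := by
    refine Finset.sum_subset ?_ ?_
    · exact Finset.range_subset_range.2 (by omega)
    · intro p hp hpn
      exact hfz p (by simpa using hpn)
  have hSn : auxS μ n t = ∑ q ∈ Finset.range N, g q := by
    refine Finset.sum_subset ?_ ?_
    · exact Finset.range_subset_range.2 (by omega)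
    · intro q hq hqn
      exact hgz q (by simpa using hqn)
  set U : Finset (ℕ × ℕ) := (Finset.range N).biUnion (fun i => Finset.HasAntidiagonal.antidiagonal i)
    with hU
  have hmemU : ∀ x : ℕ × ℕ, x ∈ U ↔ x.1 + x.2 < N := by
    intro x
    simp only [hU, Finset.mem_biUnion, Finset.mem_range, Finset.HasAntidiagonal.mem_antidiagonal]
    constructor
    · rintro ⟨i, hi, rfl⟩; exact hi
    · intro h; exact ⟨x.1 + x.2, h, rfl⟩
  have hprod : auxS μ m t * auxS μ n t = ∑ x ∈ Finset.range N ×ˢ Finset.range N,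
      f x.1 * g x.2 := by
    rw [hSm, hSn, Finset.sum_mul_sum]
    rw [Finset.sum_product]
  have hUsub : U ⊆ Finset.range N ×ˢ Finset.range N := by
    intro x hx
    rw [hmemU] at hx
    simp [Finset.mem_product]
    omega
  have hUeq : ∑ x ∈ Finset.range N ×ˢ Finset.range N, f x.1 * g x.2
      = ∑ x ∈ U, f x.1 * g x.2 := by
    refine (Finset.sum_subset hUsub ?_).symm
    intro x hx hxU
    rw [hmemU] at hxU
    push_neg at hxU
    rcases (by omega : m + 1 ≤ x.1 ∨ n + 1 ≤ x.2) with h | h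
    · rw [hfz x.1 h, zero_mul]
    · rw [hgz x.2 h, mul_zero]
  have hbi : ∑ x ∈ U, f x.1 * g x.2
      = ∑ i ∈ Finset.range N, ∑ x ∈ Finset.HasAntidiagonal.antidiagonal i, f x.1 * g x.2 := by
    refine Finset.sum_biUnion ?_
    intro i _ j _ hij
    refine Finset.disjoint_left.2 ?_
    intro x hx hx'
    rw [Finset.HasAntidiagonal.mem_antidiagonal] at hx hx'
    exact hij (hx ▸ hx')
  have hconv : ∀ i ∈ Finset.range N, ∑ x ∈ Finset.HasAntidiagonal.antidiagonal i, f x.1 * g x.2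
      = (∑ k ∈ Finset.range (i + 1), μ m k * μ n (i - k)) * Real.exp (i * t) := by
    intro i _
    rw [Finset.Nat.sum_antidiagonal_eq_sum_range_succ_mk, Finset.sum_mul]
    refine Finset.sum_congr rfl ?_
    intro k hk
    have hki : k ≤ i := by
      rw [Finset.mem_range] at hk; omega
    have : Real.exp (k * t) * Real.exp ((i - k : ℕ) * t) = Real.exp (i * t) := by
      rw [← Real.exp_add, ← add_mul]
      congr 2
      push_cast [Nat.cast_sub hki]
      ring
    simp only [hf, hgdef]
    rw [mul_mul_mul_comm, this]
  calc auxS μ m t * auxS μ n t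
      = ∑ i ∈ Finset.range N, (∑ k ∈ Finset.range (i + 1), μ m k * μ n (i - k))
          * Real.exp (i * t) := by
        rw [hprod, hUeq, hbi]; exact Finset.sum_congr rfl hconv
    _ ≤ ∑ i ∈ Finset.range N, μ (m + n) i * Real.exp (i * t) := by
        refine Finset.sum_le_sum fun i _ => ?_
        exact mul_le_mul_of_nonneg_right (hsup m n hm hn i) (Real.exp_pos _).le
    _ = auxS μ (m + n) t := rfl

end Aux

/-- For a proper super-convolutive sequence, the limit function `Λ`
satisfies `g 1 t ≤ Λ(t) ≤ max(γ, t + γ)` for all `t`, and `Λ` is convex and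
monotonically nondecreasing. -/
theorem proper_superconvolutive_limit_properties
    (μ : ℕ → ℕ → ℝ)
    (hnonneg : ∀ n i, 0 ≤ μ n i)
    (hzero : ∀ n i : ℕ, n + 1 ≤ i → μ n i = 0)
    (hsup : ∀ m n : ℕ, 1 ≤ m → 1 ≤ n → ∀ i : ℕ,
      ∑ k ∈ Finset.range (i + 1), μ m k * μ n (i - k) ≤ μ (m + n) i)
    (hpos0 : ∀ n : ℕ, 1 ≤ n → 0 < μ n 0)
    (hposn : ∀ n : ℕ, 1 ≤ n → 0 < μ n n)
    (β : ℝ)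
    (hβ : Tendsto (fun n : ℕ => (1 / (n : ℝ)) * Real.log (μ n 0)) atTop (𝓝 β))
    (g : ℕ → ℝ → ℝ)
    (hg : ∀ n t, g n t =
      (1 / (n : ℝ)) * Real.log (∑ j ∈ Finset.range (n + 1), μ n j * Real.exp (j * t)))
    (Λ : ℝ → EReal)
    (hΛ : ∀ t : ℝ, Tendsto (fun n : ℕ => ((g n t : ℝ) : EReal)) atTop (𝓝 (Λ t)))
    (γ : ℝ) (hγ : Λ 0 = (γ : EReal)) :
    (∀ t : ℝ, ((g 1 t : ℝ) : EReal) ≤ Λ t ∧ Λ t ≤ max ((γ : ℝ) : EReal) (((t + γ : ℝ)) : EReal)) ∧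
    (∀ s t : ℝ, s ≤ t → Λ s ≤ Λ t) ∧
    (∀ s t a b : ℝ, 0 ≤ a → 0 ≤ b → a + b = 1 →
      Λ (a * s + b * t) ≤ (a : EReal) * Λ s + (b : EReal) * Λ t) := by
  have hg' : ∀ n t, g n t = (1 / (n : ℝ)) * Real.log (auxS μ n t) := hg
  have hSpos := auxS_pos μ hnonneg hpos0
  have hSsup := auxS_supermul μ hnonneg hzero hsup
  -- S n t ≥ (S 1 t)^n
  have hpow : ∀ n : ℕ, 1 ≤ n → ∀ t, auxS μ 1 t ^ n ≤ auxS μ n t := by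
    intro n hn t
    induction n, hn using Nat.le_induction with
    | base => rw [pow_one]
    | succ k hk ih =>
      calc auxS μ 1 t ^ (k + 1) = auxS μ 1 t ^ k * auxS μ 1 t := pow_succ _ _
        _ ≤ auxS μ k t * auxS μ 1 t :=
            mul_le_mul_of_nonneg_right ih (hSpos 1 le_rfl t).le
        _ ≤ auxS μ (k + 1) t := hSsup k 1 hk le_rfl t
  -- g 1 t ≤ g n t
  have hg1le : ∀ n : ℕ, 1 ≤ n → ∀ t, g 1 t ≤ g n t := by
    intro n hn t
    rw [hg', hg']
    have h1 : (0:ℝ) < auxS μ 1 t := hSpos 1 le_rfl t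
    have hlog : (n : ℝ) * Real.log (auxS μ 1 t) ≤ Real.log (auxS μ n t) := by
      rw [← Real.log_pow]
      exact Real.log_le_log (pow_pos h1 n) (hpow n hn t)
    have hn0 : (0:ℝ) < (n : ℝ) := by exact_mod_cast hn
    rw [Nat.cast_one, div_self one_ne_zero, one_mul]
    calc Real.log (auxS μ 1 t)
        = (1 / (n:ℝ)) * ((n:ℝ) * Real.log (auxS μ 1 t)) := by field_simp
      _ ≤ (1 / (n:ℝ)) * Real.log (auxS μ n t) :=
          mul_le_mul_of_nonneg_left hlog (by positivity)
  -- g n is monotone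
  have hgmono : ∀ n : ℕ, 1 ≤ n → ∀ s t : ℝ, s ≤ t → g n s ≤ g n t := by
    intro n hn s t hst
    rw [hg', hg']
    refine mul_le_mul_of_nonneg_left ?_ (by positivity)
    refine Real.log_le_log (hSpos n hn s) ?_
    refine Finset.sum_le_sum fun j _ => ?_
    refine mul_le_mul_of_nonneg_left (Real.exp_le_exp.2 ?_) (hnonneg n j)
    exact mul_le_mul_of_nonneg_left hst (by positivity)
  -- g n t ≤ g n 0 + max t 0
  have hgshift : ∀ n : ℕ, 1 ≤ n → ∀ t : ℝ, g n t ≤ g n 0 + max t 0 := by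
    intro n hn t
    have hS : auxS μ n t ≤ Real.exp ((n : ℝ) * max t 0) * auxS μ n 0 := by
      rw [auxS, auxS, Finset.mul_sum]
      refine Finset.sum_le_sum fun j hj => ?_
      have hjn : (j : ℝ) ≤ (n : ℝ) := by
        rw [Finset.mem_range] at hj; exact_mod_cast Nat.lt_succ_iff.1 hj
      have h1 : (j : ℝ) * t ≤ (n : ℝ) * max t 0 := by
        calc (j : ℝ) * t ≤ (j : ℝ) * max t 0 :=
              mul_le_mul_of_nonneg_left (le_max_left _ _) (by positivity)
          _ ≤ (n : ℝ) * max t 0 := mul_le_mul_of_nonneg_right hjn (le_max_right _ _)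
      calc μ n j * Real.exp (j * t) ≤ μ n j * Real.exp ((n:ℝ) * max t 0) :=
            mul_le_mul_of_nonneg_left (Real.exp_le_exp.2 h1) (hnonneg n j)
        _ = Real.exp ((n:ℝ) * max t 0) * (μ n j * Real.exp (j * 0)) := by
            rw [mul_zero, Real.exp_zero, mul_one]; ring
    have hn0 : (0:ℝ) < (n : ℝ) := by exact_mod_cast hn
    have hlog : Real.log (auxS μ n t) ≤ (n:ℝ) * max t 0 + Real.log (auxS μ n 0) := by
      calc Real.log (auxS μ n t)
          ≤ Real.log (Real.exp ((n:ℝ) * max t 0) * auxS μ n 0) :=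
            Real.log_le_log (hSpos n hn t) hS
        _ = (n:ℝ) * max t 0 + Real.log (auxS μ n 0) := by
            rw [Real.log_mul (Real.exp_ne_zero _) (hSpos n hn 0).ne', Real.log_exp]
    rw [hg', hg']
    calc (1 / (n:ℝ)) * Real.log (auxS μ n t)
        ≤ (1 / (n:ℝ)) * ((n:ℝ) * max t 0 + Real.log (auxS μ n 0)) :=
          mul_le_mul_of_nonneg_left hlog (by positivity)
      _ = (1 / (n:ℝ)) * Real.log (auxS μ n 0) + max t 0 := by field_simp; ring
  -- convexity of g n
  have hgconv : ∀ n : ℕ, 1 ≤ n → ∀ s t a b : ℝ, 0 ≤ a → 0 ≤ b → a + b = 1 →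
      g n (a * s + b * t) ≤ a * g n s + b * g n t := by
    intro n hn s t a b ha hb hab
    set A := auxS μ n s with hA
    set B := auxS μ n t with hB
    have hApos : 0 < A := hSpos n hn s
    have hBpos : 0 < B := hSpos n hn t
    have hABpos : 0 < A ^ a * B ^ b :=
      mul_pos (Real.rpow_pos_of_pos hApos a) (Real.rpow_pos_of_pos hBpos b)
    have hkey : auxS μ n (a * s + b * t) ≤ A ^ a * B ^ b := by
      have hterm : ∀ j ∈ Finset.range (n + 1),
        μ n j * Real.exp (j * (a * s + b * t))
          = (μ n j * Real.exp (j * s)) ^ a * (μ n j * Real.exp (j * t)) ^ b := by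
        intro j _
        rw [Real.mul_rpow (hnonneg n j) (Real.exp_pos _).le,
          Real.mul_rpow (hnonneg n j) (Real.exp_pos _).le,
          ← Real.exp_mul, ← Real.exp_mul]
        rw [mul_mul_mul_comm, ← Real.rpow_add' (hnonneg n j) (by rw [hab]; norm_num),
          hab, Real.rpow_one, ← Real.exp_add]
        ring_nf
      have hsum : ∑ j ∈ Finset.range (n + 1),
          (μ n j * Real.exp (j * s)) ^ a * (μ n j * Real.exp (j * t)) ^ b
          ≤ A ^ a * B ^ b := by
        rw [← div_le_one hABpos, Finset.sum_div]
        have : ∀ j ∈ Finset.range (n + 1),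
            (μ n j * Real.exp (j * s)) ^ a * (μ n j * Real.exp (j * t)) ^ b
              / (A ^ a * B ^ b)
            = (μ n j * Real.exp (j * s) / A) ^ a * (μ n j * Real.exp (j * t) / B) ^ b := by
          intro j _
          rw [Real.div_rpow (mul_nonneg (hnonneg n j) (Real.exp_pos _).le) hApos.le,
            Real.div_rpow (mul_nonneg (hnonneg n j) (Real.exp_pos _).le) hBpos.le,
            div_mul_div_comm]
        rw [Finset.sum_congr rfl this]
        have hle : ∑ j ∈ Finset.range (n + 1),
            (μ n j * Real.exp (j * s) / A) ^ a * (μ n j * Real.exp (j * t) / B) ^ b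
            ≤ ∑ j ∈ Finset.range (n + 1),
              (a * (μ n j * Real.exp (j * s) / A) + b * (μ n j * Real.exp (j * t) / B)) := by
          refine Finset.sum_le_sum fun j _ => ?_
          exact Real.geom_mean_le_arith_mean2_weighted ha hb
            (div_nonneg (mul_nonneg (hnonneg n j) (Real.exp_pos _).le) hApos.le)
            (div_nonneg (mul_nonneg (hnonneg n j) (Real.exp_pos _).le) hBpos.le) hab
        refine hle.trans ?_
        rw [Finset.sum_add_distrib, ← Finset.mul_sum, ← Finset.mul_sum,
          ← Finset.sum_div, ← Finset.sum_div]
        rw [show (∑ j ∈ Finset.range (n + 1), μ n j * Real.exp (j * s)) = A from rfl,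
          show (∑ j ∈ Finset.range (n + 1), μ n j * Real.exp (j * t)) = B from rfl,
          div_self hApos.ne', div_self hBpos.ne', mul_one, mul_one, hab]
      calc auxS μ n (a * s + b * t)
          = ∑ j ∈ Finset.range (n + 1),
            (μ n j * Real.exp (j * s)) ^ a * (μ n j * Real.exp (j * t)) ^ b :=
            Finset.sum_congr rfl hterm
        _ ≤ A ^ a * B ^ b := hsum
    have hlog : Real.log (auxS μ n (a * s + b * t)) ≤ a * Real.log A + b * Real.log B := by
      calc Real.log (auxS μ n (a * s + b * t)) ≤ Real.log (A ^ a * B ^ b) :=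
            Real.log_le_log (hSpos n hn _) hkey
        _ = a * Real.log A + b * Real.log B := by
            rw [Real.log_mul (Real.rpow_pos_of_pos hApos a).ne'
              (Real.rpow_pos_of_pos hBpos b).ne',
              Real.log_rpow hApos, Real.log_rpow hBpos]
    rw [hg', hg', hg']
    calc (1 / (n:ℝ)) * Real.log (auxS μ n (a * s + b * t))
        ≤ (1 / (n:ℝ)) * (a * Real.log A + b * Real.log B) :=
          mul_le_mul_of_nonneg_left hlog (by positivity)
      _ = a * ((1 / (n:ℝ)) * Real.log A) + b * ((1 / (n:ℝ)) * Real.log B) := by ring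
  -- the limit of g n 0 is γ
  have hg0γ : Tendsto (fun n : ℕ => g n 0) atTop (𝓝 γ) := by
    have := hΛ 0
    rw [hγ] at this
    exact EReal.tendsto_coe.mp this
  -- lower bound on Λ
  have hlb : ∀ t : ℝ, ((g 1 t : ℝ) : EReal) ≤ Λ t := by
    intro t
    refine ge_of_tendsto (hΛ t) ?_
    filter_upwards [eventually_ge_atTop 1] with n hn
    exact EReal.coe_le_coe_iff.2 (hg1le n hn t)
  -- upper bound on Λ
  have hub : ∀ t : ℝ, Λ t ≤ ((γ + max t 0 : ℝ) : EReal) := by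
    intro t
    refine le_of_tendsto_of_tendsto (hΛ t)
      (EReal.tendsto_coe.2 ((hg0γ.add_const (max t 0)))) ?_
    filter_upwards [eventually_ge_atTop 1] with n hn
    exact EReal.coe_le_coe_iff.2 (hgshift n hn t)
  -- Λ t is a real number, with real convergence
  have hreal : ∀ t : ℝ, ∃ l : ℝ, Λ t = (l : EReal) ∧
      Tendsto (fun n : ℕ => g n t) atTop (𝓝 l) := by
    intro t
    have hne1 : Λ t ≠ ⊤ := ((hub t).trans_lt (EReal.coe_lt_top _)).ne
    have hne2 : Λ t ≠ ⊥ := ((EReal.bot_lt_coe _).trans_le (hlb t)).ne'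
    refine ⟨(Λ t).toReal, (EReal.coe_toReal hne1 hne2).symm, ?_⟩
    refine EReal.tendsto_coe.mp ?_
    rw [EReal.coe_toReal hne1 hne2]
    exact hΛ t
  refine ⟨fun t => ⟨hlb t, ?_⟩, fun s t hst => ?_, fun s t a b ha hb hab => ?_⟩
  · refine (hub t).trans ?_
    rcases le_total t 0 with h | h
    · rw [max_eq_right h, add_zero]
      exact le_max_left _ _
    · rw [max_eq_left h]
      refine le_trans ?_ (le_max_right _ _)
      exact EReal.coe_le_coe_iff.2 (by linarith)
  · refine le_of_tendsto_of_tendsto (hΛ s) (hΛ t) ?_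
    filter_upwards [eventually_ge_atTop 1] with n hn
    exact EReal.coe_le_coe_iff.2 (hgmono n hn s t hst)
  · obtain ⟨ls, hls, hlims⟩ := hreal s
    obtain ⟨lt, hlt, hlimt⟩ := hreal t
    rw [hls, hlt, ← EReal.coe_mul, ← EReal.coe_mul, ← EReal.coe_add]
    refine le_of_tendsto_of_tendsto (hΛ (a * s + b * t))
      (EReal.tendsto_coe.2 ((hlims.const_mul a).add (hlimt.const_mul b))) ?_
    filter_upwards [eventually_ge_atTop 1] with n hn
    exact EReal.coe_le_coe_iff.2 (hgconv n hn s t a b ha hb hab)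
end

section
/- Let (μ_n) be a proper super-convolutive sequence with limit function Λ as above. Then the convex conjugate Λ*(x) = sup_t (xt − Λ(t)) is finite exactly on [0,1], and Λ* is convex and continuous on [0,1]. -/
open Filter
open scoped Topology BigOperators

/-- For a proper super-convolutive sequence with limit function `Λ`,
the convex conjugate `Λ*(x) = sup_t (xt − Λ(t))` is finite exactly on `[0,1]`,
and (as a real-valued function there) it is convex and continuous on `[0,1]`. -/
theorem conjugate_of_limit_function
    (μ : ℕ → ℕ → ℝ)
    (hnonneg : ∀ n i, 0 ≤ μ n i)
    (hzero : ∀ n i : ℕ, n + 1 ≤ i → μ n i = 0)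
    (hsup : ∀ m n : ℕ, 1 ≤ m → 1 ≤ n → ∀ i : ℕ,
      ∑ k ∈ Finset.range (i + 1), μ m k * μ n (i - k) ≤ μ (m + n) i)
    (hpos0 : ∀ n : ℕ, 1 ≤ n → 0 < μ n 0)
    (hposn : ∀ n : ℕ, 1 ≤ n → 0 < μ n n)
    (β : ℝ)
    (hβ : Tendsto (fun n : ℕ => (1 / (n : ℝ)) * Real.log (μ n 0)) atTop (𝓝 β))
    (g : ℕ → ℝ → ℝ)
    (hg : ∀ n t, g n t =
      (1 / (n : ℝ)) * Real.log (∑ j ∈ Finset.range (n + 1), μ n j * Real.exp (j * t)))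
    (Λ : ℝ → EReal)
    (hΛ : ∀ t : ℝ, Tendsto (fun n : ℕ => ((g n t : ℝ) : EReal)) atTop (𝓝 (Λ t)))
    (γ : ℝ) (hγ : Λ 0 = (γ : EReal))
    (Λstar : ℝ → EReal)
    (hΛstar : ∀ x : ℝ, Λstar x = ⨆ t : ℝ, (((x * t : ℝ) : EReal) - Λ t)) :
    (∀ x : ℝ, (Λstar x ≠ ⊤ ∧ Λstar x ≠ ⊥) ↔ x ∈ Set.Icc (0 : ℝ) 1) ∧
    ConvexOn ℝ (Set.Icc (0 : ℝ) 1) (fun x => (Λstar x).toReal) ∧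
    ContinuousOn (fun x => (Λstar x).toReal) (Set.Icc (0 : ℝ) 1) := by
  classical
  set α₁ : ℝ := Real.log (μ 1 1) with hα₁def
  set β₁ : ℝ := Real.log (μ 1 0) with hβ₁def
  set S : ℕ → ℝ → ℝ := fun n t => ∑ j ∈ Finset.range (n + 1), μ n j * Real.exp (j * t)
    with hSdef
  -- positivity of the sums
  have hterm_nonneg : ∀ n t, ∀ j ∈ Finset.range (n + 1), 0 ≤ μ n j * Real.exp (j * t) :=
    fun n t j _ => mul_nonneg (hnonneg n j) (Real.exp_pos _).le
  have hterm_le : ∀ n t, ∀ j ∈ Finset.range (n + 1), μ n j * Real.exp (j * t) ≤ S n t :=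
    fun n t j hj => Finset.single_le_sum (hterm_nonneg n t) hj
  have hSpos : ∀ n : ℕ, 1 ≤ n → ∀ t : ℝ, 0 < S n t := by
    intro n hn t
    have h0 : (0 : ℕ) ∈ Finset.range (n + 1) := Finset.mem_range.2 (Nat.succ_pos n)
    refine Finset.sum_pos' (hterm_nonneg n t) ⟨0, h0, ?_⟩
    exact mul_pos (hpos0 n hn) (Real.exp_pos _)
  -- μ n 0 ≥ μ 1 0 ^ n and μ n n ≥ μ 1 1 ^ n
  have hstep0 : ∀ m : ℕ, 1 ≤ m → μ 1 0 * μ m 0 ≤ μ (1 + m) 0 := by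
    intro m hm
    have h := hsup 1 m le_rfl hm 0
    simpa using h
  have hstepn : ∀ m : ℕ, 1 ≤ m → μ 1 1 * μ m m ≤ μ (1 + m) (1 + m) := by
    intro m hm
    have h := hsup 1 m le_rfl hm (1 + m)
    have h1 : μ 1 1 * μ m (1 + m - 1) ≤ ∑ k ∈ Finset.range (1 + m + 1), μ 1 k * μ m (1 + m - k) := by
      refine Finset.single_le_sum (fun k _ => mul_nonneg (hnonneg 1 k) (hnonneg m _)) ?_
      exact Finset.mem_range.2 (by omega)
    have h2 : 1 + m - 1 = m := by omega
    rw [h2] at h1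
    exact h1.trans h
  have hpow0 : ∀ n : ℕ, 1 ≤ n → μ 1 0 ^ n ≤ μ n 0 := by
    intro n hn
    induction n with
    | zero => omega
    | succ m ih =>
      rcases Nat.eq_or_lt_of_le hn with h | h
      · simp [← h]
      · have hm : 1 ≤ m := by omega
        have := hstep0 m hm
        have h2 : μ 1 0 ^ (m + 1) ≤ μ 1 0 * μ m 0 := by
          rw [pow_succ, mul_comm]
          exact mul_le_mul_of_nonneg_left (ih hm) (hpos0 1 le_rfl).le
        have h3 : (1 + m) = m + 1 := by omega
        rw [h3] at this
        exact h2.trans this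
  have hpown : ∀ n : ℕ, 1 ≤ n → μ 1 1 ^ n ≤ μ n n := by
    intro n hn
    induction n with
    | zero => omega
    | succ m ih =>
      rcases Nat.eq_or_lt_of_le hn with h | h
      · simp [← h]
      · have hm : 1 ≤ m := by omega
        have := hstepn m hm
        have h2 : μ 1 1 ^ (m + 1) ≤ μ 1 1 * μ m m := by
          rw [pow_succ, mul_comm]
          exact mul_le_mul_of_nonneg_left (ih hm) (hposn 1 le_rfl).le
        have h3 : (1 + m) = m + 1 := by omega
        rw [h3] at this
        exact h2.trans this
  -- bounds for g
  have hg_ge0 : ∀ n : ℕ, 1 ≤ n → ∀ t : ℝ, β₁ ≤ g n t := by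
    intro n hn t
    have hnpos : (0 : ℝ) < (n : ℝ) := by exact_mod_cast hn
    have h1 : μ n 0 ≤ S n t := by
      have := hterm_le n t 0 (Finset.mem_range.2 (Nat.succ_pos n))
      simpa using this
    have hlog : (n : ℝ) * β₁ ≤ Real.log (S n t) := by
      rw [hβ₁def, ← Real.log_pow]
      have hp : (0 : ℝ) < μ 1 0 ^ n := pow_pos (hpos0 1 le_rfl) n
      exact Real.log_le_log hp ((hpow0 n hn).trans h1)
    rw [hg n t]
    calc β₁ = (1 / (n : ℝ)) * ((n : ℝ) * β₁) := by field_simp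
    _ ≤ (1 / (n : ℝ)) * Real.log (S n t) :=
        mul_le_mul_of_nonneg_left hlog (by positivity)
  have hg_ge1 : ∀ n : ℕ, 1 ≤ n → ∀ t : ℝ, t + α₁ ≤ g n t := by
    intro n hn t
    have hnpos : (0 : ℝ) < (n : ℝ) := by exact_mod_cast hn
    have h1 : μ n n * Real.exp (n * t) ≤ S n t :=
      hterm_le n t n (Finset.mem_range.2 (Nat.lt_succ_self n))
    have hlog : (n : ℝ) * (t + α₁) ≤ Real.log (S n t) := by
      have hp : (0 : ℝ) < μ 1 1 ^ n * Real.exp (n * t) :=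
        mul_pos (pow_pos (hposn 1 le_rfl) n) (Real.exp_pos _)
      have h2 : μ 1 1 ^ n * Real.exp (n * t) ≤ S n t := by
        refine le_trans ?_ h1
        exact mul_le_mul_of_nonneg_right (hpown n hn) (Real.exp_pos _).le
      have := Real.log_le_log hp h2
      rw [Real.log_mul (pow_pos (hposn 1 le_rfl) n).ne' (Real.exp_pos _).ne', Real.log_pow,
        Real.log_exp] at this
      rw [hα₁def]
      nlinarith
    rw [hg n t]
    calc t + α₁ = (1 / (n : ℝ)) * ((n : ℝ) * (t + α₁)) := by field_simp
    _ ≤ (1 / (n : ℝ)) * Real.log (S n t) :=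
        mul_le_mul_of_nonneg_left hlog (by positivity)
  have hg_le : ∀ n : ℕ, 1 ≤ n → ∀ t : ℝ, g n t ≤ g n 0 + max 0 t := by
    intro n hn t
    have hnpos : (0 : ℝ) < (n : ℝ) := by exact_mod_cast hn
    have hSle : S n t ≤ S n 0 * Real.exp ((n : ℝ) * max 0 t) := by
      rw [hSdef]
      simp only []
      rw [Finset.sum_mul]
      refine Finset.sum_le_sum fun j hj => ?_
      have hjn : (j : ℝ) ≤ (n : ℝ) := by
        have := Finset.mem_range.1 hj
        exact_mod_cast Nat.lt_succ_iff.1 this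
      have hje : (j : ℝ) * t ≤ (n : ℝ) * max 0 t := by
        rcases le_or_gt t 0 with ht | ht
        · have : (j : ℝ) * t ≤ 0 := mul_nonpos_of_nonneg_of_nonpos (by positivity) ht
          have h2 : (0 : ℝ) ≤ (n : ℝ) * max 0 t := by positivity
          linarith
        · rw [max_eq_right ht.le]
          exact mul_le_mul_of_nonneg_right hjn ht.le
      calc μ n j * Real.exp (j * t) ≤ μ n j * Real.exp ((n : ℝ) * max 0 t) :=
            mul_le_mul_of_nonneg_left (Real.exp_le_exp.2 hje) (hnonneg n j)
      _ = μ n j * Real.exp ((j : ℝ) * 0) * Real.exp ((n : ℝ) * max 0 t) := by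
            rw [mul_zero, Real.exp_zero, mul_one]
    have hlog : Real.log (S n t) ≤ Real.log (S n 0) + (n : ℝ) * max 0 t := by
      have := Real.log_le_log (hSpos n hn t) hSle
      rwa [Real.log_mul (hSpos n hn 0).ne' (Real.exp_pos _).ne', Real.log_exp] at this
    rw [hg n t, hg n 0]
    calc (1 / (n : ℝ)) * Real.log (S n t)
        ≤ (1 / (n : ℝ)) * (Real.log (S n 0) + (n : ℝ) * max 0 t) :=
          mul_le_mul_of_nonneg_left hlog (by positivity)
    _ = (1 / (n : ℝ)) * Real.log (S n 0) + max 0 t := by field_simp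
  -- g n 0 → γ
  have hg0γ : Tendsto (fun n : ℕ => g n 0) atTop (𝓝 γ) := by
    have := hΛ 0
    rw [hγ] at this
    exact EReal.tendsto_coe.1 this
  -- Λ is finite, with explicit bounds
  have hΛlb : ∀ t : ℝ, ((max β₁ (t + α₁) : ℝ) : EReal) ≤ Λ t := by
    intro t
    refine ge_of_tendsto (hΛ t) ?_
    filter_upwards [eventually_ge_atTop 1] with n hn
    exact EReal.coe_le_coe_iff.2 (max_le (hg_ge0 n hn t) (hg_ge1 n hn t))
  have hΛub : ∀ t : ℝ, Λ t ≤ ((γ + max 0 t : ℝ) : EReal) := by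
    intro t
    refine le_of_tendsto_of_tendsto' (hΛ t)
      (EReal.tendsto_coe.2 (hg0γ.add_const (max 0 t))) ?_
    intro n
    rcases Nat.eq_zero_or_pos n with h | h
    · subst h
      have h0 : g 0 t = 0 := by rw [hg]; simp
      have h1 : g 0 0 = 0 := by rw [hg]; simp
      rw [h0, h1]
      exact EReal.coe_le_coe_iff.2 (by simp)
    · exact EReal.coe_le_coe_iff.2 (hg_le n h t)
  have hΛne_top : ∀ t, Λ t ≠ ⊤ := fun t => ((hΛub t).trans_lt (EReal.coe_lt_top _)).ne
  have hΛne_bot : ∀ t, Λ t ≠ ⊥ := fun t => ((EReal.bot_lt_coe _).trans_le (hΛlb t)).ne'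
  set Λr : ℝ → ℝ := fun t => (Λ t).toReal with hΛrdef
  have hΛfin : ∀ t, Λ t = ((Λr t : ℝ) : EReal) :=
    fun t => (EReal.coe_toReal (hΛne_top t) (hΛne_bot t)).symm
  have hΛrlb : ∀ t, max β₁ (t + α₁) ≤ Λr t := by
    intro t
    have := hΛlb t
    rw [hΛfin t] at this
    exact EReal.coe_le_coe_iff.1 this
  have hΛrub : ∀ t, Λr t ≤ γ + max 0 t := by
    intro t
    have := hΛub t
    rw [hΛfin t] at this
    exact EReal.coe_le_coe_iff.1 this
  have hΛr0 : Λr 0 = γ := by rw [hΛrdef]; simp [hγ]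
  set F : ℝ → ℝ → ℝ := fun x t => x * t - Λr t with hFdef
  have hΛstar' : ∀ x, Λstar x = ⨆ t : ℝ, ((F x t : ℝ) : EReal) := by
    intro x
    rw [hΛstar x]
    congr 1
    funext t
    rw [hΛfin t, ← EReal.coe_sub]
  -- F bounded above on [0,1]
  have hFub : ∀ x ∈ Set.Icc (0 : ℝ) 1, ∀ t, F x t ≤ max (-α₁) (-β₁) := by
    rintro x ⟨hx0, hx1⟩ t
    rcases le_or_gt 0 t with ht | ht
    · have h1 : t + α₁ ≤ Λr t := (le_max_right _ _).trans (hΛrlb t)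
      have : F x t ≤ x * t - (t + α₁) := by
        simp only [hFdef]; linarith
      refine this.trans (le_trans ?_ (le_max_left _ _))
      nlinarith
    · have h1 : β₁ ≤ Λr t := (le_max_left _ _).trans (hΛrlb t)
      have : F x t ≤ x * t - β₁ := by simp only [hFdef]; linarith
      refine this.trans (le_trans ?_ (le_max_right _ _))
      nlinarith
  have hFbdd : ∀ x ∈ Set.Icc (0 : ℝ) 1, BddAbove (Set.range (F x)) := by
    intro x hx
    exact ⟨max (-α₁) (-β₁), Set.forall_mem_range.2 fun t => hFub x hx t⟩
  set fr : ℝ → ℝ := fun x => ⨆ t : ℝ, F x t with hfrdef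
  have hle_fr : ∀ x ∈ Set.Icc (0 : ℝ) 1, ∀ t, F x t ≤ fr x := by
    intro x hx t
    exact le_ciSup (hFbdd x hx) t
  have hcoe : ∀ x ∈ Set.Icc (0 : ℝ) 1, Λstar x = ((fr x : ℝ) : EReal) := by
    intro x hx
    rw [hΛstar' x, hfrdef]
    exact (Monotone.map_ciSup_of_continuousAt (f := (fun r : ℝ => (r : EReal)))
      (continuous_coe_real_ereal.continuousAt) (EReal.coe_strictMono.monotone)
      (hFbdd x hx)).symm
  -- Λstar = ⊤ outside [0,1]
  have htop_gt : ∀ x : ℝ, 1 < x → Λstar x = ⊤ := by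
    intro x hx
    rw [(Λstar x).eq_top_iff_forall_lt]
    intro c
    rw [hΛstar' x]
    set t : ℝ := (|c| + |γ| + 1) / (x - 1) with htdef
    have hxp : 0 < x - 1 := by linarith
    have htpos : 0 ≤ t := by positivity
    have hmul : (x - 1) * t = |c| + |γ| + 1 := by
      rw [htdef]; field_simp
    have hF : c < F x t := by
      have h1 : Λr t ≤ γ + t := by
        have := hΛrub t
        rw [max_eq_right htpos] at this
        exact this
      have h2 : x * t - (γ + t) ≤ F x t := by simp only [hFdef]; linarith
      have h3 : x * t - (γ + t) = (x - 1) * t - γ := by ring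
      have hc : c ≤ |c| := le_abs_self c
      have hγ' : -|γ| ≤ -γ := neg_le_neg (le_abs_self γ)
      nlinarith [abs_nonneg c, abs_nonneg γ]
    calc ((c : ℝ) : EReal) < ((F x t : ℝ) : EReal) := EReal.coe_lt_coe_iff.2 hF
    _ ≤ ⨆ s : ℝ, ((F x s : ℝ) : EReal) := le_iSup (fun s : ℝ => ((F x s : ℝ) : EReal)) t
  have htop_lt : ∀ x : ℝ, x < 0 → Λstar x = ⊤ := by
    intro x hx
    rw [(Λstar x).eq_top_iff_forall_lt]
    intro c
    rw [hΛstar' x]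
    set t : ℝ := (|c| + |γ| + 1) / x with htdef
    have htneg : t ≤ 0 := div_nonpos_of_nonneg_of_nonpos (by positivity) hx.le
    have hxne : x ≠ 0 := ne_of_lt hx
    have hmul : x * t = |c| + |γ| + 1 := by
      rw [htdef]; field_simp
    have hF : c < F x t := by
      have h1 : Λr t ≤ γ := by
        have := hΛrub t
        rw [max_eq_left htneg] at this
        simpa using this
      have h2 : x * t - γ ≤ F x t := by simp only [hFdef]; linarith
      have hc : c ≤ |c| := le_abs_self c
      nlinarith [abs_nonneg c, abs_nonneg γ, le_abs_self γ]
    calc ((c : ℝ) : EReal) < ((F x t : ℝ) : EReal) := EReal.coe_lt_coe_iff.2 hF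
    _ ≤ ⨆ s : ℝ, ((F x s : ℝ) : EReal) := le_iSup (fun s : ℝ => ((F x s : ℝ) : EReal)) t
  -- part 1
  have part1 : ∀ x : ℝ, (Λstar x ≠ ⊤ ∧ Λstar x ≠ ⊥) ↔ x ∈ Set.Icc (0 : ℝ) 1 := by
    intro x
    constructor
    · rintro ⟨hT, _⟩
      by_contra hx
      rw [Set.mem_Icc, not_and_or, not_le, not_le] at hx
      rcases hx with h | h
      · exact hT (htop_lt x h)
      · exact hT (htop_gt x h)
    · intro hx
      rw [hcoe x hx]
      exact ⟨EReal.coe_ne_top _, EReal.coe_ne_bot _⟩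
  -- convexity of fr on [0,1]
  have hconv : ConvexOn ℝ (Set.Icc (0 : ℝ) 1) fr := by
    refine ⟨convex_Icc _ _, ?_⟩
    intro x hx y hy a b ha hb hab
    have hxy : a • x + b • y ∈ Set.Icc (0 : ℝ) 1 := (convex_Icc (0:ℝ) 1) hx hy ha hb hab
    refine ciSup_le fun t => ?_
    have hFt : F (a • x + b • y) t = a * F x t + b * F y t := by
      simp only [hFdef, smul_eq_mul]
      linear_combination (Λr t) * hab
    rw [hFt]
    simp only [smul_eq_mul]
    exact add_le_add (mul_le_mul_of_nonneg_left (hle_fr x hx t) ha)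
      (mul_le_mul_of_nonneg_left (hle_fr y hy t) hb)
  -- chord bound for upper semicontinuity
  have hchord : ∀ x₀ ∈ Set.Icc (0 : ℝ) 1, ∀ x ∈ Set.Icc (0 : ℝ) 1,
      fr x ≤ fr x₀ + |x - x₀| * (|fr 1 - fr x₀| / (1 - x₀) + |fr 0 - fr x₀| / x₀) := by
    rintro x₀ ⟨h00, h01⟩ x ⟨hx0, hx1⟩
    set K : ℝ := |fr 1 - fr x₀| / (1 - x₀) + |fr 0 - fr x₀| / x₀ with hKdef
    have hK : 0 ≤ K := add_nonneg (div_nonneg (abs_nonneg _) (by linarith))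
      (div_nonneg (abs_nonneg _) (by linarith))
    rcases lt_trichotomy x x₀ with h | h | h
    · -- use left endpoint 0
      have hx₀pos : 0 < x₀ := lt_of_le_of_lt hx0 h
      have hx₀ne : x₀ ≠ 0 := ne_of_gt hx₀pos
      set s : ℝ := (x₀ - x) / x₀ with hsdef
      have hs0 : 0 ≤ s := div_nonneg (by linarith) hx₀pos.le
      have hs1 : s ≤ 1 := by
        rw [hsdef, div_le_one hx₀pos]; linarith
      have hcomb : (1 - s) • x₀ + s • (0 : ℝ) = x := by
        simp only [smul_eq_mul, mul_zero, add_zero, hsdef]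
        field_simp
        ring
      have := hconv.2 (Set.mem_Icc.2 ⟨h00, h01⟩) (Set.mem_Icc.2 ⟨le_refl 0, zero_le_one⟩)
        (by linarith : (0:ℝ) ≤ 1 - s) hs0 (by ring)
      rw [hcomb] at this
      have h2 : fr x ≤ fr x₀ + s * (fr 0 - fr x₀) := by
        simp only [smul_eq_mul] at this; linarith
      have h3 : s * (fr 0 - fr x₀) ≤ s * |fr 0 - fr x₀| :=
        mul_le_mul_of_nonneg_left (le_abs_self _) hs0
      have h4 : s * |fr 0 - fr x₀| = (x₀ - x) * (|fr 0 - fr x₀| / x₀) := by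
        rw [hsdef]; ring
      have h5 : |x - x₀| = x₀ - x := by rw [abs_sub_comm]; exact abs_of_nonneg (by linarith)
      have h6 : (x₀ - x) * (|fr 0 - fr x₀| / x₀) ≤ (x₀ - x) * K := by
        refine mul_le_mul_of_nonneg_left ?_ (by linarith)
        rw [hKdef]
        have : (0:ℝ) ≤ |fr 1 - fr x₀| / (1 - x₀) := div_nonneg (abs_nonneg _) (by linarith)
        linarith
      rw [h5]
      calc fr x ≤ fr x₀ + s * (fr 0 - fr x₀) := h2
      _ ≤ fr x₀ + s * |fr 0 - fr x₀| := by linarith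
      _ = fr x₀ + (x₀ - x) * (|fr 0 - fr x₀| / x₀) := by rw [h4]
      _ ≤ fr x₀ + (x₀ - x) * K := by linarith
    · rw [h]
      simp
    · -- use right endpoint 1
      have hx₀lt : x₀ < 1 := lt_of_lt_of_le h hx1
      set s : ℝ := (x - x₀) / (1 - x₀) with hsdef
      have hd : 0 < 1 - x₀ := by linarith
      have hdne : 1 - x₀ ≠ 0 := ne_of_gt hd
      have hs0 : 0 ≤ s := div_nonneg (by linarith) hd.le
      have hs1 : s ≤ 1 := by
        rw [hsdef, div_le_one hd]; linarith
      have hcomb : (1 - s) • x₀ + s • (1 : ℝ) = x := by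
        simp only [smul_eq_mul, mul_one, hsdef]
        field_simp
        ring
      have := hconv.2 (Set.mem_Icc.2 ⟨h00, h01⟩) (Set.mem_Icc.2 ⟨zero_le_one, le_refl 1⟩)
        (by linarith : (0:ℝ) ≤ 1 - s) hs0 (by ring)
      rw [hcomb] at this
      have h2 : fr x ≤ fr x₀ + s * (fr 1 - fr x₀) := by
        simp only [smul_eq_mul] at this; linarith
      have h3 : s * (fr 1 - fr x₀) ≤ s * |fr 1 - fr x₀| :=
        mul_le_mul_of_nonneg_left (le_abs_self _) hs0
      have h4 : s * |fr 1 - fr x₀| = (x - x₀) * (|fr 1 - fr x₀| / (1 - x₀)) := by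
        rw [hsdef]; ring
      have h5 : |x - x₀| = x - x₀ := abs_of_nonneg (by linarith)
      have h6 : (x - x₀) * (|fr 1 - fr x₀| / (1 - x₀)) ≤ (x - x₀) * K := by
        refine mul_le_mul_of_nonneg_left ?_ (by linarith)
        rw [hKdef]
        have : (0:ℝ) ≤ |fr 0 - fr x₀| / x₀ := div_nonneg (abs_nonneg _) (by linarith)
        linarith
      rw [h5]
      calc fr x ≤ fr x₀ + s * (fr 1 - fr x₀) := h2
      _ ≤ fr x₀ + s * |fr 1 - fr x₀| := by linarith
      _ = fr x₀ + (x - x₀) * (|fr 1 - fr x₀| / (1 - x₀)) := by rw [h4]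
      _ ≤ fr x₀ + (x - x₀) * K := by linarith
  -- continuity of fr on [0,1]
  have hcont : ContinuousOn fr (Set.Icc (0 : ℝ) 1) := by
    intro x₀ hx₀
    rw [ContinuousWithinAt, tendsto_order]
    constructor
    · intro a ha
      obtain ⟨t, ht⟩ := exists_lt_of_lt_ciSup ha
      have hc : Tendsto (fun x : ℝ => F x t) (𝓝[Set.Icc (0:ℝ) 1] x₀) (𝓝 (F x₀ t)) := by
        refine Tendsto.mono_left ?_ nhdsWithin_le_nhds
        exact ((continuous_mul_right t).sub continuous_const).tendsto x₀
      filter_upwards [hc.eventually (eventually_gt_nhds ht), self_mem_nhdsWithin] with x h1 h2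
      exact h1.trans_le (hle_fr x h2 t)
    · intro a ha
      set K : ℝ := |fr 1 - fr x₀| / (1 - x₀) + |fr 0 - fr x₀| / x₀ with hKdef
      have hc : Tendsto (fun x : ℝ => fr x₀ + |x - x₀| * K) (𝓝[Set.Icc (0:ℝ) 1] x₀)
          (𝓝 (fr x₀ + |x₀ - x₀| * K)) := by
        refine Tendsto.mono_left ?_ nhdsWithin_le_nhds
        exact (continuous_const.add (((continuous_id.sub continuous_const).abs).mul
          continuous_const)).tendsto x₀
      have h0 : fr x₀ + |x₀ - x₀| * K = fr x₀ := by simp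
      rw [h0] at hc
      filter_upwards [hc.eventually (eventually_lt_nhds ha), self_mem_nhdsWithin] with x h1 h2
      exact lt_of_le_of_lt (hchord x₀ hx₀ x h2) h1
  -- transfer to (Λstar ·).toReal
  have heq : Set.EqOn (fun x => (Λstar x).toReal) fr (Set.Icc (0:ℝ) 1) := by
    intro x hx
    simp only [hcoe x hx, EReal.toReal_coe]
  refine ⟨part1, ?_, hcont.congr heq⟩
  refine ⟨convex_Icc _ _, ?_⟩
  intro x hx y hy a b ha hb hab
  have hxy : a • x + b • y ∈ Set.Icc (0 : ℝ) 1 := (convex_Icc (0:ℝ) 1) hx hy ha hb hab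
  simp only [heq hx, heq hy, heq hxy]
  exact hconv.2 hx hy ha hb hab
end

section
/- Let (μ_n) be a proper super-convolutive sequence, g_n(t) = (1/n) log ∑_j μ_n(j)e^{jt}, and Λ = lim g_n. Then for every x ∈ (0,1), the convex conjugates satisfy lim_{n→∞} g_n*(x) = Λ*(x), where f*(x) = sup_t (xt − f(t)). -/
open Filter
open scoped Topology BigOperators

lemma mu_pow_bounds (μ : ℕ → ℕ → ℝ) (hnonneg : ∀ n i, 0 ≤ μ n i)
    (hsup : ∀ m n : ℕ, 1 ≤ m → 1 ≤ n → ∀ i : ℕ,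
      ∑ k ∈ Finset.range (i + 1), μ m k * μ n (i - k) ≤ μ (m + n) i) :
    ∀ n : ℕ, 1 ≤ n → (μ 1 0) ^ n ≤ μ n 0 ∧ (μ 1 1) ^ n ≤ μ n n := by
  intro n hn
  induction n with
  | zero => omega
  | succ m ih =>
    rcases Nat.eq_or_lt_of_le hn with h1 | h1
    · simp [← h1]
    · have hm : 1 ≤ m := by omega
      obtain ⟨ih0, ih1⟩ := ih hm
      constructor
      · have h := hsup 1 m le_rfl hm 0
        simp only [Nat.zero_add, Finset.sum_range_one] at h
        have : μ 1 0 ^ (m + 1) = μ 1 0 * μ 1 0 ^ m := by ring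
        rw [this]
        calc μ 1 0 * μ 1 0 ^ m ≤ μ 1 0 * μ m 0 :=
              mul_le_mul_of_nonneg_left ih0 (hnonneg 1 0)
          _ ≤ μ (1 + m) 0 := by simpa using h
          _ = μ (m + 1) 0 := by rw [Nat.add_comm]
      · have h := hsup 1 m le_rfl hm (m + 1)
        have hmem : 1 ∈ Finset.range (m + 1 + 1) := by
          simp only [Finset.mem_range]; omega
        have hsingle : μ 1 1 * μ m (m + 1 - 1) ≤
            ∑ k ∈ Finset.range (m + 1 + 1), μ 1 k * μ m (m + 1 - k) :=
          Finset.single_le_sum (fun k _ => mul_nonneg (hnonneg 1 k) (hnonneg m _)) hmem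
        simp only [Nat.add_sub_cancel] at hsingle
        have : μ 1 1 ^ (m + 1) = μ 1 1 * μ 1 1 ^ m := by ring
        rw [this]
        calc μ 1 1 * μ 1 1 ^ m ≤ μ 1 1 * μ m m :=
              mul_le_mul_of_nonneg_left ih1 (hnonneg 1 1)
          _ ≤ μ (1 + m) (m + 1) := le_trans hsingle h
          _ = μ (m + 1) (m + 1) := by rw [Nat.add_comm]

lemma term_le_sum (μ : ℕ → ℕ → ℝ) (hnonneg : ∀ n i, 0 ≤ μ n i)
    (n j : ℕ) (hj : j ≤ n) (t : ℝ) :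
    μ n j * Real.exp (j * t) ≤ ∑ k ∈ Finset.range (n + 1), μ n k * Real.exp (k * t) := by
  exact Finset.single_le_sum (f := fun k => μ n k * Real.exp (k * t))
    (fun k _ => mul_nonneg (hnonneg n k) (Real.exp_pos _).le)
    (Finset.mem_range.2 (by omega))

lemma sum_exp_pos (μ : ℕ → ℕ → ℝ) (hnonneg : ∀ n i, 0 ≤ μ n i)
    (hpos0 : ∀ n : ℕ, 1 ≤ n → 0 < μ n 0) (n : ℕ) (hn : 1 ≤ n) (t : ℝ) :
    0 < ∑ j ∈ Finset.range (n + 1), μ n j * Real.exp (j * t) := by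
  have h := term_le_sum μ hnonneg n 0 (by omega) t
  simp only [Nat.cast_zero, zero_mul, Real.exp_zero, mul_one] at h
  exact lt_of_lt_of_le (hpos0 n hn) h

lemma g_lb0 (μ : ℕ → ℕ → ℝ) (hnonneg : ∀ n i, 0 ≤ μ n i)
    (hpos0 : ∀ n : ℕ, 1 ≤ n → 0 < μ n 0)
    (hsup : ∀ m n : ℕ, 1 ≤ m → 1 ≤ n → ∀ i : ℕ,
      ∑ k ∈ Finset.range (i + 1), μ m k * μ n (i - k) ≤ μ (m + n) i)
    (n : ℕ) (hn : 1 ≤ n) (t : ℝ) :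
    Real.log (μ 1 0) ≤
      (1 / (n : ℝ)) * Real.log (∑ j ∈ Finset.range (n + 1), μ n j * Real.exp (j * t)) := by
  have hn' : (0 : ℝ) < n := by exact_mod_cast hn
  have hpow : (μ 1 0) ^ n ≤ ∑ j ∈ Finset.range (n + 1), μ n j * Real.exp (j * t) := by
    have h1 := (mu_pow_bounds μ hnonneg hsup n hn).1
    have h2 := term_le_sum μ hnonneg n 0 (by omega) t
    simp only [Nat.cast_zero, zero_mul, Real.exp_zero, mul_one] at h2
    linarith
  have hppos : (0 : ℝ) < (μ 1 0) ^ n := pow_pos (hpos0 1 le_rfl) n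
  have hlog : (n : ℝ) * Real.log (μ 1 0) ≤
      Real.log (∑ j ∈ Finset.range (n + 1), μ n j * Real.exp (j * t)) := by
    have := Real.log_le_log hppos hpow
    rwa [Real.log_pow] at this
  calc Real.log (μ 1 0) = (1 / (n : ℝ)) * ((n : ℝ) * Real.log (μ 1 0)) := by
        field_simp
    _ ≤ _ := mul_le_mul_of_nonneg_left hlog (by positivity)

lemma g_lb1 (μ : ℕ → ℕ → ℝ) (hnonneg : ∀ n i, 0 ≤ μ n i)
    (hpos1 : 0 < μ 1 1)
    (hsup : ∀ m n : ℕ, 1 ≤ m → 1 ≤ n → ∀ i : ℕ,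
      ∑ k ∈ Finset.range (i + 1), μ m k * μ n (i - k) ≤ μ (m + n) i)
    (n : ℕ) (hn : 1 ≤ n) (t : ℝ) :
    t + Real.log (μ 1 1) ≤
      (1 / (n : ℝ)) * Real.log (∑ j ∈ Finset.range (n + 1), μ n j * Real.exp (j * t)) := by
  have hn' : (0 : ℝ) < n := by exact_mod_cast hn
  have hpow : (μ 1 1 * Real.exp t) ^ n ≤
      ∑ j ∈ Finset.range (n + 1), μ n j * Real.exp (j * t) := by
    have h1 := (mu_pow_bounds μ hnonneg hsup n hn).2
    have h2 := term_le_sum μ hnonneg n n le_rfl t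
    have hexp : Real.exp ((n : ℝ) * t) = (Real.exp t) ^ n := by
      rw [← Real.exp_nat_mul]
    have : (μ 1 1 * Real.exp t) ^ n = μ 1 1 ^ n * Real.exp ((n : ℝ) * t) := by
      rw [mul_pow, hexp]
    rw [this]
    calc μ 1 1 ^ n * Real.exp ((n : ℝ) * t) ≤ μ n n * Real.exp ((n : ℝ) * t) :=
          mul_le_mul_of_nonneg_right h1 (Real.exp_pos _).le
      _ ≤ _ := h2
  have hppos : (0 : ℝ) < (μ 1 1 * Real.exp t) ^ n :=
    pow_pos (mul_pos hpos1 (Real.exp_pos t)) n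
  have hlog : (n : ℝ) * (t + Real.log (μ 1 1)) ≤
      Real.log (∑ j ∈ Finset.range (n + 1), μ n j * Real.exp (j * t)) := by
    have h := Real.log_le_log hppos hpow
    rw [Real.log_pow, Real.log_mul (ne_of_gt hpos1) (ne_of_gt (Real.exp_pos t)),
      Real.log_exp] at h
    calc (n : ℝ) * (t + Real.log (μ 1 1)) = (n : ℝ) * (Real.log (μ 1 1) + t) := by ring
      _ ≤ _ := h
  calc t + Real.log (μ 1 1) = (1 / (n : ℝ)) * ((n : ℝ) * (t + Real.log (μ 1 1))) := by
        field_simp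
    _ ≤ _ := mul_le_mul_of_nonneg_left hlog (by positivity)

lemma g_lip (μ : ℕ → ℕ → ℝ) (hnonneg : ∀ n i, 0 ≤ μ n i)
    (hpos0 : ∀ n : ℕ, 1 ≤ n → 0 < μ n 0)
    (n : ℕ) (hn : 1 ≤ n) {s t : ℝ} (hst : s ≤ t) :
    (1 / (n : ℝ)) * Real.log (∑ j ∈ Finset.range (n + 1), μ n j * Real.exp (j * s)) ≤
      (1 / (n : ℝ)) * Real.log (∑ j ∈ Finset.range (n + 1), μ n j * Real.exp (j * t)) ∧
    (1 / (n : ℝ)) * Real.log (∑ j ∈ Finset.range (n + 1), μ n j * Real.exp (j * t)) ≤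
      (t - s) + (1 / (n : ℝ)) * Real.log (∑ j ∈ Finset.range (n + 1), μ n j * Real.exp (j * s)) := by
  have hn' : (0 : ℝ) < n := by exact_mod_cast hn
  have hs := sum_exp_pos μ hnonneg hpos0 n hn s
  have ht := sum_exp_pos μ hnonneg hpos0 n hn t
  constructor
  · have hsum : (∑ j ∈ Finset.range (n + 1), μ n j * Real.exp (j * s)) ≤
        ∑ j ∈ Finset.range (n + 1), μ n j * Real.exp (j * t) := by
      apply Finset.sum_le_sum
      intro j _
      exact mul_le_mul_of_nonneg_left
        (Real.exp_le_exp.2 (mul_le_mul_of_nonneg_left hst (Nat.cast_nonneg j))) (hnonneg n j)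
    exact mul_le_mul_of_nonneg_left (Real.log_le_log hs hsum) (by positivity)
  · have hsum : (∑ j ∈ Finset.range (n + 1), μ n j * Real.exp (j * t)) ≤
        Real.exp ((n : ℝ) * (t - s)) * ∑ j ∈ Finset.range (n + 1), μ n j * Real.exp (j * s) := by
      rw [Finset.mul_sum]
      apply Finset.sum_le_sum
      intro j hj
      have hjn : (j : ℝ) ≤ (n : ℝ) := by
        exact_mod_cast Nat.lt_succ_iff.mp (Finset.mem_range.mp hj)
      have : Real.exp ((j : ℝ) * t) ≤ Real.exp ((n : ℝ) * (t - s)) * Real.exp ((j : ℝ) * s) := by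
        rw [← Real.exp_add]
        apply Real.exp_le_exp.2
        nlinarith [sub_nonneg.2 hst]
      calc μ n j * Real.exp ((j : ℝ) * t)
          ≤ μ n j * (Real.exp ((n : ℝ) * (t - s)) * Real.exp ((j : ℝ) * s)) :=
            mul_le_mul_of_nonneg_left this (hnonneg n j)
        _ = Real.exp ((n : ℝ) * (t - s)) * (μ n j * Real.exp ((j : ℝ) * s)) := by ring
    have hlog := Real.log_le_log ht hsum
    rw [Real.log_mul (ne_of_gt (Real.exp_pos _)) (ne_of_gt hs), Real.log_exp] at hlog
    have := mul_le_mul_of_nonneg_left hlog (le_of_lt (one_div_pos.2 hn'))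
    rw [mul_add] at this
    have heq : (1 / (n : ℝ)) * ((n : ℝ) * (t - s)) = t - s := by field_simp
    rw [heq] at this
    linarith

/-- For a proper super-convolutive sequence with normalized log
generating functions `g n` and limit `Λ`, the convex conjugates converge on
`(0,1)`: `lim_n g_n*(x) = Λ*(x)` for every `x ∈ (0,1)`. -/
theorem conjugates_converge_on_open_interval
    (μ : ℕ → ℕ → ℝ)
    (hnonneg : ∀ n i, 0 ≤ μ n i)
    (hzero : ∀ n i : ℕ, n + 1 ≤ i → μ n i = 0)
    (hsup : ∀ m n : ℕ, 1 ≤ m → 1 ≤ n → ∀ i : ℕ,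
      ∑ k ∈ Finset.range (i + 1), μ m k * μ n (i - k) ≤ μ (m + n) i)
    (hpos0 : ∀ n : ℕ, 1 ≤ n → 0 < μ n 0)
    (hposn : ∀ n : ℕ, 1 ≤ n → 0 < μ n n)
    (β : ℝ)
    (hβ : Tendsto (fun n : ℕ => (1 / (n : ℝ)) * Real.log (μ n 0)) atTop (𝓝 β))
    (g : ℕ → ℝ → ℝ)
    (hg : ∀ n t, g n t =
      (1 / (n : ℝ)) * Real.log (∑ j ∈ Finset.range (n + 1), μ n j * Real.exp (j * t)))
    (Λ : ℝ → EReal)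
    (hΛ : ∀ t : ℝ, Tendsto (fun n : ℕ => ((g n t : ℝ) : EReal)) atTop (𝓝 (Λ t)))
    (γ : ℝ) (hγ : Λ 0 = (γ : EReal))
    (Λstar : ℝ → EReal)
    (hΛstar : ∀ x : ℝ, Λstar x = ⨆ t : ℝ, (((x * t : ℝ) : EReal) - Λ t))
    (x : ℝ) (hx : x ∈ Set.Ioo (0 : ℝ) 1) :
    Λstar x ≠ ⊤ ∧ Λstar x ≠ ⊥ ∧
    Tendsto (fun n : ℕ => ⨆ t : ℝ, (x * t - g n t)) atTop (𝓝 ((Λstar x).toReal)) := by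
  obtain ⟨hx0, hx1⟩ := hx
  set c0 := Real.log (μ 1 0) with hc0
  set c1 := Real.log (μ 1 1) with hc1
  -- basic bounds on g
  have hglb0 : ∀ n : ℕ, 1 ≤ n → ∀ t : ℝ, c0 ≤ g n t := by
    intro n hn t; rw [hg]; exact g_lb0 μ hnonneg hpos0 hsup n hn t
  have hglb1 : ∀ n : ℕ, 1 ≤ n → ∀ t : ℝ, t + c1 ≤ g n t := by
    intro n hn t; rw [hg]; exact g_lb1 μ hnonneg (hposn 1 le_rfl) hsup n hn t
  have hgmono : ∀ n : ℕ, 1 ≤ n → ∀ s t : ℝ, s ≤ t → g n s ≤ g n t := by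
    intro n hn s t hst; rw [hg, hg]; exact (g_lip μ hnonneg hpos0 n hn hst).1
  have hglip : ∀ n : ℕ, 1 ≤ n → ∀ s t : ℝ, s ≤ t → g n t ≤ (t - s) + g n s := by
    intro n hn s t hst; rw [hg, hg]; exact (g_lip μ hnonneg hpos0 n hn hst).2
  -- convergence at 0
  have hγ0 : Tendsto (fun n : ℕ => g n 0) atTop (𝓝 γ) := by
    have := hΛ 0; rw [hγ] at this; exact EReal.tendsto_coe.mp this
  -- pointwise finiteness of Λ and real convergence
  have key : ∀ t : ℝ, Λ t ≠ ⊤ ∧ Λ t ≠ ⊥ ∧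
      Tendsto (fun n : ℕ => g n t) atTop (𝓝 ((Λ t).toReal)) := by
    intro t
    have hub : ∀ᶠ n : ℕ in atTop, g n t ≤ γ + 1 + |t| := by
      have h1 : ∀ᶠ n : ℕ in atTop, g n 0 ≤ γ + 1 :=
        hγ0.eventually_lt_const (by linarith) |>.mono fun n h => h.le
      filter_upwards [h1, eventually_ge_atTop 1] with n hng hn
      rcases le_or_gt t 0 with ht | ht
      · have := hgmono n hn t 0 ht
        have := abs_nonneg t
        linarith
      · have := hglip n hn 0 t ht.le
        have := le_abs_self t
        linarith
    have hlb : ∀ᶠ n : ℕ in atTop, c0 ≤ g n t := by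
      filter_upwards [eventually_ge_atTop 1] with n hn
      exact hglb0 n hn t
    have hΛub : Λ t ≤ ((γ + 1 + |t| : ℝ) : EReal) :=
      le_of_tendsto (hΛ t) (hub.mono fun n h => EReal.coe_le_coe_iff.2 h)
    have hΛlb : ((c0 : ℝ) : EReal) ≤ Λ t :=
      ge_of_tendsto (hΛ t) (hlb.mono fun n h => EReal.coe_le_coe_iff.2 h)
    have hnt : Λ t ≠ ⊤ := (lt_of_le_of_lt hΛub (EReal.coe_lt_top _)).ne
    have hnb : Λ t ≠ ⊥ := (lt_of_lt_of_le (EReal.bot_lt_coe _) hΛlb).ne'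
    refine ⟨hnt, hnb, ?_⟩
    have hcoe := EReal.coe_toReal hnt hnb
    have := hΛ t
    rw [← hcoe] at this
    exact EReal.tendsto_coe.mp this
  have hL0 : (Λ 0).toReal = γ := by rw [hγ]; exact EReal.toReal_coe γ
  have hLlb0 : ∀ t : ℝ, c0 ≤ (Λ t).toReal := by
    intro t
    refine ge_of_tendsto ((key t).2.2) ?_
    filter_upwards [eventually_ge_atTop 1] with n hn
    exact hglb0 n hn t
  have hLlb1 : ∀ t : ℝ, t + c1 ≤ (Λ t).toReal := by
    intro t
    refine ge_of_tendsto ((key t).2.2) ?_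
    filter_upwards [eventually_ge_atTop 1] with n hn
    exact hglb1 n hn t
  -- bounded above ranges
  have hub_aux : ∀ (L' : ℝ → ℝ), (∀ t, c0 ≤ L' t) → (∀ t, t + c1 ≤ L' t) →
      ∀ t : ℝ, x * t - L' t ≤ max (-c0) (-c1) := by
    intro L' h0 h1 t
    rcases le_or_gt t 0 with ht | ht
    · have hxt : x * t ≤ 0 := mul_nonpos_of_nonneg_of_nonpos hx0.le ht
      have := h0 t
      have : x * t - L' t ≤ -c0 := by linarith
      exact le_trans this (le_max_left _ _)
    · have hxt : x * t - t ≤ 0 := by nlinarith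
      have := h1 t
      have : x * t - L' t ≤ -c1 := by linarith
      exact le_trans this (le_max_right _ _)
  have hbddh : BddAbove (Set.range fun t : ℝ => x * t - (Λ t).toReal) := by
    refine ⟨max (-c0) (-c1), ?_⟩
    rintro y ⟨t, rfl⟩
    exact hub_aux _ hLlb0 hLlb1 t
  have hbddg : ∀ n : ℕ, 1 ≤ n → BddAbove (Set.range fun t : ℝ => x * t - g n t) := by
    intro n hn
    refine ⟨max (-c0) (-c1), ?_⟩
    rintro y ⟨t, rfl⟩
    exact hub_aux (g n) (hglb0 n hn) (hglb1 n hn) t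
  set S : ℝ := ⨆ t : ℝ, (x * t - (Λ t).toReal) with hSdef
  have hS0 : -γ ≤ S := by
    have := le_ciSup hbddh 0
    simpa [hL0] using this
  -- identify Λstar x
  have hre : ∀ t : ℝ, ((x * t : ℝ) : EReal) - Λ t = ((x * t - (Λ t).toReal : ℝ) : EReal) := by
    intro t
    rw [EReal.coe_sub]
    congr 1
    exact (EReal.coe_toReal (key t).1 (key t).2.1).symm
  have hsup_eq : Λstar x = ((S : ℝ) : EReal) := by
    rw [hΛstar]
    apply le_antisymm
    · refine iSup_le fun t => ?_
      rw [hre t]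
      exact EReal.coe_le_coe_iff.2 (le_ciSup hbddh t)
    · set b := ⨆ t : ℝ, (((x * t : ℝ) : EReal) - Λ t) with hb
      by_cases hbt : b = ⊤
      · rw [hbt]; exact le_top
      · have hbb : ((x * 0 - (Λ 0).toReal : ℝ) : EReal) ≤ b := by
          rw [← hre 0, hb]
          exact le_iSup (fun t : ℝ => ((x * t : ℝ) : EReal) - Λ t) 0
        have hbne : b ≠ ⊥ := (lt_of_lt_of_le (EReal.bot_lt_coe _) hbb).ne'
        rw [← EReal.coe_toReal hbt hbne]
        apply EReal.coe_le_coe_iff.2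
        apply ciSup_le
        intro t
        have h1 : ((x * t - (Λ t).toReal : ℝ) : EReal) ≤ b := by
          rw [← hre t, hb]
          exact le_iSup (fun t : ℝ => ((x * t : ℝ) : EReal) - Λ t) t
        rw [← EReal.coe_toReal hbt hbne] at h1
        exact EReal.coe_le_coe_iff.1 h1
  refine ⟨by rw [hsup_eq]; exact EReal.coe_ne_top _,
    by rw [hsup_eq]; exact EReal.coe_ne_bot _, ?_⟩
  rw [hsup_eq, EReal.toReal_coe]
  rw [tendsto_order]
  constructor
  · -- lower bound
    intro a ha
    obtain ⟨t₀, ht₀⟩ := exists_lt_of_lt_ciSup ha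
    have hconv : Tendsto (fun n : ℕ => x * t₀ - g n t₀) atTop (𝓝 (x * t₀ - (Λ t₀).toReal)) :=
      tendsto_const_nhds.sub ((key t₀).2.2)
    have hev : ∀ᶠ n : ℕ in atTop, a < x * t₀ - g n t₀ :=
      hconv.eventually_const_lt ht₀
    filter_upwards [hev, eventually_ge_atTop 1] with n h1 hn
    exact lt_of_lt_of_le h1 (le_ciSup (hbddg n hn) t₀)
  · -- upper bound
    intro b hb
    set ε := b - S with hε
    have hεpos : 0 < ε := by rw [hε]; linarith
    set δ := ε / 4 with hδdef
    have hδpos : 0 < δ := by positivity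
    set A : ℝ := min ((c0 - γ) / x) 0 - 1 with hA
    set B : ℝ := max ((γ - c1) / (1 - x)) 0 + 1 with hB
    have hAB : A ≤ B := by
      have h1 := min_le_right ((c0 - γ) / x) (0 : ℝ)
      have h2 := le_max_right ((γ - c1) / (1 - x)) (0 : ℝ)
      rw [hA, hB]
      linarith
    set K : ℕ := ⌈(B - A) / δ⌉₊ with hK
    have hgrid_ev : ∀ᶠ n : ℕ in atTop, ∀ i ∈ Finset.range (K + 1),
        x * (A + i * δ) - g n (A + i * δ) ≤ S + ε / 2 := by
      rw [eventually_all_finset]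
      intro i _
      have hconv : Tendsto (fun n : ℕ => x * (A + i * δ) - g n (A + i * δ)) atTop
          (𝓝 (x * (A + i * δ) - (Λ (A + i * δ)).toReal)) :=
        tendsto_const_nhds.sub ((key (A + i * δ)).2.2)
      have hle : x * (A + i * δ) - (Λ (A + i * δ)).toReal < S + ε / 2 :=
        lt_of_le_of_lt (le_ciSup hbddh (A + i * δ)) (by linarith)
      exact (hconv.eventually_lt_const hle).mono fun n h => h.le
    filter_upwards [hgrid_ev, eventually_ge_atTop 1] with n hgridn hn
    have hFle : (⨆ t : ℝ, (x * t - g n t)) ≤ S + 3 * ε / 4 := by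
      apply ciSup_le
      intro t
      rcases le_or_gt t A with htA | htA
      · -- left tail
        have h1 := hglb0 n hn t
        have h2 : x * t ≤ c0 - γ := by
          have hA' : t ≤ (c0 - γ) / x := by
            have := min_le_left ((c0 - γ) / x) (0 : ℝ)
            rw [hA] at htA
            linarith
          calc x * t ≤ x * ((c0 - γ) / x) := mul_le_mul_of_nonneg_left hA' hx0.le
            _ = c0 - γ := by field_simp
        linarith [hS0]
      rcases le_or_gt B t with htB | htB
      · -- right tail
        have h1 := hglb1 n hn t
        have h2 : (x - 1) * t ≤ c1 - γ := by
          have hB' : (γ - c1) / (1 - x) ≤ t := by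
            have := le_max_left ((γ - c1) / (1 - x)) (0 : ℝ)
            rw [hB] at htB
            linarith
          have h3 : (x - 1) * t ≤ (x - 1) * ((γ - c1) / (1 - x)) :=
            mul_le_mul_of_nonpos_left hB' (by linarith)
          have h1x : (1 : ℝ) - x ≠ 0 := by linarith
          have h4 : (x - 1) * ((γ - c1) / (1 - x)) = c1 - γ := by
            have he : (x - 1) * ((γ - c1) / (1 - x)) = -((γ - c1) / (1 - x) * (1 - x)) := by
              ring
            rw [he, div_mul_cancel₀ _ h1x]
            ring
          linarith
        have hring : (x - 1) * t = x * t - t := by ring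
        linarith [hS0]
      · -- middle, use grid
        set i : ℕ := ⌊(t - A) / δ⌋₊ with hi
        have htApos : 0 ≤ (t - A) / δ := div_nonneg (by linarith) hδpos.le
        have hfl : (i : ℝ) ≤ (t - A) / δ := Nat.floor_le htApos
        have hfl2 : (t - A) / δ < (i : ℝ) + 1 := Nat.lt_floor_add_one _
        have hti : A + i * δ ≤ t := by
          have h := (le_div_iff₀ hδpos).mp hfl
          linarith
        have htub : t ≤ A + i * δ + δ := by
          have h := (div_lt_iff₀ hδpos).mp hfl2
          nlinarith
        have hiK : i ∈ Finset.range (K + 1) := by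
          rw [Finset.mem_range, Nat.lt_succ_iff]
          calc i ≤ ⌈(t - A) / δ⌉₊ := Nat.floor_le_ceil _
            _ ≤ K := Nat.ceil_le_ceil ((div_le_div_iff_of_pos_right hδpos).mpr (by linarith))
        have hg1 := hgridn i hiK
        have hg2 : g n (A + i * δ) ≤ g n t := hgmono n hn _ _ hti
        have hxt : x * t - x * (A + i * δ) ≤ δ := by
          nlinarith [mul_nonneg (by linarith : (0:ℝ) ≤ 1 - x)
            (by linarith : (0:ℝ) ≤ t - (A + i * δ))]
        have hδ4 : δ = ε / 4 := hδdef
        have hfinal : x * t - g n t ≤ S + ε / 2 + δ := by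
          clear_value i K B A δ ε S
          linarith [hg1, hg2, hxt]
        linarith
    have hεb : b = S + ε := by rw [hε]; ring
    rw [hεb]
    exact lt_of_le_of_lt hFle (by linarith)
end

section
/- Let (f_n) be a sequence of continuous convex functions on a closed interval [a,b] converging pointwise to a continuous function f on [a,b]. Then f_n converges to f uniformly on [a,b]. -/
open Filter
open scoped Topology

private lemma aux_lower (t Fx Fq Fr A e : ℝ) (ht1 : 1/2 ≤ t) (ht2 : t ≤ 1)
    (hq : Fq ≤ t * Fx + (1 - t) * Fr) (hA : A - e ≤ Fq) (hB : Fr ≤ A + 2*e)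
    (he : 0 ≤ e) : A - 4*e ≤ Fx := by
  nlinarith [mul_le_mul_of_nonneg_left hB (by linarith : (0:ℝ) ≤ 1 - t),
    mul_nonneg he (by linarith : (0:ℝ) ≤ 2*t - 1)]

set_option maxHeartbeats 1000000 in
/-- A sequence of continuous convex functions on `[a,b]` converging
pointwise to a continuous function `f` converges uniformly on `[a,b]`. -/
theorem convex_pointwise_to_uniform
    (a b : ℝ) (hab : a ≤ b) (f : ℕ → ℝ → ℝ) (g : ℝ → ℝ)
    (hconv : ∀ n, ConvexOn ℝ (Set.Icc a b) (f n))
    (hcont : ∀ n, ContinuousOn (f n) (Set.Icc a b))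
    (hgcont : ContinuousOn g (Set.Icc a b))
    (hpt : ∀ x ∈ Set.Icc a b, Tendsto (fun n => f n x) atTop (𝓝 (g x))) :
    TendstoUniformlyOn f g atTop (Set.Icc a b) := by
  rcases eq_or_lt_of_le hab with rfl | hlt
  · rw [Metric.tendstoUniformlyOn_iff]
    intro ε hε
    filter_upwards [(hpt a (by simp)).eventually (Metric.ball_mem_nhds _ hε)] with n hn x hx
    have hxa : x = a := le_antisymm hx.2 hx.1
    subst hxa
    simpa [dist_comm] using hn
  rw [Metric.tendstoUniformlyOn_iff]
  intro ε hε
  set e := ε/6 with he_def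
  have he : 0 < e := by positivity
  have hunif : UniformContinuousOn g (Set.Icc a b) :=
    isCompact_Icc.uniformContinuousOn_of_continuous hgcont
  obtain ⟨δ, hδ, hδg⟩ := Metric.uniformContinuousOn_iff.mp hunif e he
  obtain ⟨m0, hm0⟩ := exists_nat_gt ((b - a)/δ)
  set m : ℕ := max 2 m0 with hm_def
  have hm2 : 2 ≤ m := le_max_left _ _
  have hmpos : (0:ℝ) < m := by
    have : (2:ℝ) ≤ m := by exact_mod_cast hm2
    linarith
  set h : ℝ := (b - a)/m with hh_def
  have hh : 0 < h := div_pos (by linarith) hmpos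
  have hm0' : (b - a)/δ < (m:ℝ) := by
    refine hm0.trans_le ?_
    exact_mod_cast le_max_right 2 m0
  have hhδ : h < δ := by
    rw [hh_def, div_lt_iff₀ hmpos]
    have := (div_lt_iff₀ hδ).mp hm0'
    linarith
  set p : ℕ → ℝ := fun i => a + i * h with hp_def
  have hstep : ∀ i : ℕ, p (i+1) = p i + h := by
    intro i; simp only [hp_def]; push_cast; ring
  have hpm : p m = b := by
    simp only [hp_def, hh_def]
    field_simp
    ring
  have hp_mem : ∀ i : ℕ, i ≤ m → p i ∈ Set.Icc a b := by
    intro i hi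
    constructor
    · have : (0:ℝ) ≤ i * h := by positivity
      simp only [hp_def]; linarith
    · have hcast : (i:ℝ) ≤ m := by exact_mod_cast hi
      have : (i:ℝ) * h ≤ m * h := mul_le_mul_of_nonneg_right hcast hh.le
      have hb : a + (m:ℝ) * h = b := by
        have := hpm; simpa [hp_def] using this
      simp only [hp_def]; linarith
  -- closeness of g at nearby points
  have hg : ∀ y ∈ Set.Icc a b, ∀ z ∈ Set.Icc a b, |y - z| ≤ h → |g y - g z| < e := by
    intro y hy z hz hyz
    have := hδg y hy z hz (by rw [Real.dist_eq]; linarith)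
    rwa [Real.dist_eq] at this
  have hev : ∀ᶠ n in atTop, ∀ i ∈ Finset.range (m+1), |f n (p i) - g (p i)| < e := by
    rw [Filter.eventually_all_finset]
    intro i hi
    have hpi : p i ∈ Set.Icc a b := hp_mem i (by simpa [Nat.lt_succ_iff] using hi)
    filter_upwards [(hpt _ hpi).eventually (Metric.ball_mem_nhds _ he)] with n hn
    rwa [Real.dist_eq] at hn
  filter_upwards [hev] with n hn x hx
  have hFn : ∀ i : ℕ, i ≤ m → |f n (p i) - g (p i)| < e := by
    intro i hi
    exact hn i (Finset.mem_range.mpr (Nat.lt_succ_of_le hi))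
  obtain ⟨hx1, hx2⟩ := hx
  -- choose the interval index
  set jx : ℕ := ⌊(x - a)/h⌋₊ with hjx_def
  set j : ℕ := min (m-1) jx with hj_def
  have hj_lt : j < m := lt_of_le_of_lt (min_le_left _ _) (by omega)
  have hpj_le : p j ≤ x := by
    have h0 : (0:ℝ) ≤ (x - a)/h := div_nonneg (by linarith) hh.le
    have h1 : (j:ℝ) ≤ (x - a)/h := by
      have : (j:ℝ) ≤ (jx:ℝ) := by exact_mod_cast min_le_right (m-1) jx
      exact this.trans (Nat.floor_le h0)
    have := (le_div_iff₀ hh).mp h1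
    simp only [hp_def]; linarith
  have hx_le : x ≤ p (j+1) := by
    by_cases hcase : jx ≤ m - 1
    · have hj : j = jx := min_eq_right hcase
      have h2 : (x - a)/h < (jx:ℝ) + 1 := Nat.lt_floor_add_one _
      have := (div_lt_iff₀ hh).mp h2
      simp only [hp_def, hj]; push_cast; nlinarith
    · have hj : j = m - 1 := min_eq_left (by omega)
      have : j + 1 = m := by omega
      rw [this, hpm]; exact hx2
  have hx_pj1 : |p (j+1) - x| ≤ h := by
    rw [hstep] at hx_le ⊢
    rw [abs_le]; constructor <;> linarith
  clear_value jx j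
  clear_value e h m p
  clear hp_def hh_def hm_def hjx_def hj_def
  have hmem_j : p j ∈ Set.Icc a b := hp_mem j hj_lt.le
  have hmem_j1 : p (j+1) ∈ Set.Icc a b := hp_mem (j+1) hj_lt
  have hx_mem : x ∈ Set.Icc a b := ⟨hx1, hx2⟩
  have hxq : |p j - x| ≤ h := by
    have := hx_le; rw [hstep] at this
    rw [abs_le]; constructor <;> linarith
  have hstep1 := hstep j
  -- upper bound : f n x ≤ g x + 2 e
  have hupper : f n x ≤ g x + 2*e := by
    have hs0 : (0:ℝ) ≤ (x - p j)/h := div_nonneg (by linarith) hh.le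
    have hs1 : (x - p j)/h ≤ 1 := by
      rw [div_le_one hh]; linarith [hx_le, hstep1]
    set s : ℝ := (x - p j)/h with hs_def
    have hsh : s * h = x - p j := div_mul_cancel₀ _ hh.ne'
    have hcomb : (1 - s) • p j + s • p (j+1) = x := by
      rw [hstep1]; simp only [smul_eq_mul]
      linear_combination hsh
    have cx := (hconv n).2 hmem_j hmem_j1 (by linarith : (0:ℝ) ≤ 1 - s) hs0 (by ring)
    rw [hcomb] at cx
    simp only [smul_eq_mul] at cx
    have a1 := abs_lt.mp (hFn j hj_lt.le)
    have a2 := abs_lt.mp (hg _ hmem_j _ hx_mem hxq)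
    have a3 := abs_lt.mp (hFn (j+1) hj_lt)
    have a4 := abs_lt.mp (hg _ hmem_j1 _ hx_mem hx_pj1)
    have e1 : f n (p j) ≤ g x + 2*e := by linarith [a1.1, a1.2, a2.1, a2.2]
    have e2 : f n (p (j+1)) ≤ g x + 2*e := by linarith [a3.1, a3.2, a4.1, a4.2]
    nlinarith [mul_le_mul_of_nonneg_left e1 (by linarith : (0:ℝ) ≤ 1 - s),
      mul_le_mul_of_nonneg_left e2 hs0]
  -- lower bound : g x - 5 e ≤ f n x
  have hlower : g x - 5*e ≤ f n x := by
    have aq := abs_lt.mp (hg _ hmem_j1 _ hx_mem hx_pj1)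
    by_cases hjm : j + 2 ≤ m
    · -- use the point p (j+2) to the right
      have hmem_j2 : p (j+2) ∈ Set.Icc a b := hp_mem _ hjm
      have hq_eq : p (j+2) = p (j+1) + h := hstep (j+1)
      have hrx1 : h ≤ p (j+2) - x := by rw [hq_eq]; linarith
      have hrx2 : p (j+2) - x ≤ 2*h := by rw [hq_eq]; linarith [hstep1, hpj_le]
      have hrx0 : (0:ℝ) < p (j+2) - x := lt_of_lt_of_le hh hrx1
      set t : ℝ := h / (p (j+2) - x) with ht_def
      have ht1 : 1/2 ≤ t := by rw [le_div_iff₀ hrx0]; linarith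
      have ht2 : t ≤ 1 := by rw [div_le_one hrx0]; linarith
      have hth : t * (p (j+2) - x) = h := div_mul_cancel₀ _ hrx0.ne'
      have ht0 : (0:ℝ) ≤ t := le_of_lt (div_pos hh hrx0)
      clear_value t
      have cx := (hconv n).2 hx_mem hmem_j2 ht0 (by linarith : (0:ℝ) ≤ 1 - t) (by ring)
      have hcomb : t • x + (1 - t) • p (j+2) = p (j+1) := by
        simp only [smul_eq_mul]
        linear_combination hq_eq - hth
      rw [hcomb] at cx
      simp only [smul_eq_mul] at cx
      have a1 := abs_lt.mp (hFn (j+1) hj_lt)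
      have a2 := abs_lt.mp (hFn (j+2) hjm)
      have hqr : |p (j+2) - p (j+1)| ≤ h := by
        have : p (j+2) - p (j+1) = h := by rw [hq_eq]; ring
        rw [this, abs_of_nonneg hh.le]
      have a3 := abs_lt.mp (hg _ hmem_j2 _ hmem_j1 hqr)
      have hA : g (p (j+1)) - e ≤ f n (p (j+1)) := by linarith [a1.1, a1.2]
      have hB : f n (p (j+2)) ≤ g (p (j+1)) + 2*e := by linarith [a2.1, a2.2, a3.1, a3.2]
      have := aux_lower t (f n x) (f n (p (j+1))) (f n (p (j+2))) (g (p (j+1))) e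
        ht1 ht2 cx hA hB he.le
      linarith [aq.1, aq.2]
    · -- j = m - 1 ≥ 1 : use the point p (j-1) to the left
      obtain ⟨k, hk⟩ : ∃ k, j = k + 1 := ⟨j - 1, by omega⟩
      have hmem_k : p k ∈ Set.Icc a b := hp_mem _ (by omega)
      have hq_eq : p (k+1) = p k + h := hstep k
      have hpj_x : p (k+1) ≤ x := by rw [← hk]; exact hpj_le
      have hxl1 : h ≤ x - p k := by rw [hq_eq] at hpj_x; linarith
      have hxl2 : x - p k ≤ 2*h := by
        have := hx_le; rw [hk, hstep (k+1), hq_eq] at this; linarith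
      have hxl0 : (0:ℝ) < x - p k := lt_of_lt_of_le hh hxl1
      set t : ℝ := h / (x - p k) with ht_def
      have ht1 : 1/2 ≤ t := by rw [le_div_iff₀ hxl0]; linarith
      have ht2 : t ≤ 1 := by rw [div_le_one hxl0]; linarith
      have hth : t * (x - p k) = h := div_mul_cancel₀ _ hxl0.ne'
      have ht0 : (0:ℝ) ≤ t := le_of_lt (div_pos hh hxl0)
      clear_value t
      have cx := (hconv n).2 hx_mem hmem_k ht0 (by linarith : (0:ℝ) ≤ 1 - t) (by ring)
      have hcomb : t • x + (1 - t) • p k = p (k+1) := by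
        simp only [smul_eq_mul]
        linear_combination hth - hq_eq
      rw [hcomb] at cx
      simp only [smul_eq_mul] at cx
      have hmem_k1 : p (k+1) ∈ Set.Icc a b := by rw [← hk]; exact hmem_j
      have a1 := abs_lt.mp (hFn (k+1) (by omega))
      have a2 := abs_lt.mp (hFn k (by omega))
      have hql : |p k - p (k+1)| ≤ h := by rw [hq_eq]; rw [abs_le]; constructor <;> linarith
      have a3 := abs_lt.mp (hg _ hmem_k _ hmem_k1 hql)
      have hA : g (p (k+1)) - e ≤ f n (p (k+1)) := by linarith [a1.1, a1.2]
      have hB : f n (p k) ≤ g (p (k+1)) + 2*e := by linarith [a2.1, a2.2, a3.1, a3.2]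
      have hlow := aux_lower t (f n x) (f n (p (k+1))) (f n (p k)) (g (p (k+1))) e
        ht1 ht2 cx hA hB he.le
      have hqx : |p (k+1) - x| ≤ h := by
        rw [abs_le]
        have hx2h : x ≤ p (k+1) + h := by
          have := hx_le; rw [hk, hstep (k+1)] at this; exact this
        constructor <;> linarith [hpj_x, hx2h]
      have a4 := abs_lt.mp (hg _ hmem_k1 _ hx_mem hqx)
      linarith [a4.1, a4.2]
  rw [Real.dist_eq, abs_lt]
  rw [he_def] at hupper hlower
  constructor <;> linarith
end

section
/- Let (f_n) be a sequence of continuous concave functions on [a,b] converging pointwise and monotonically decreasing (f_{n+1} ≤ f_n) to a function f with f(x) > −∞ for all x. Then f is continuous and concave on [a,b]. -/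
open Filter
open scoped Topology

/-- A monotonically decreasing sequence of continuous concave
functions on `[a,b]` converging pointwise to a (finite, real-valued) function `f`
has a continuous concave limit on `[a,b]`. -/
theorem decreasing_concave_limit_continuous
    (a b : ℝ) (hab : a ≤ b) (f : ℕ → ℝ → ℝ) (g : ℝ → ℝ)
    (hconc : ∀ n, ConcaveOn ℝ (Set.Icc a b) (f n))
    (hcont : ∀ n, ContinuousOn (f n) (Set.Icc a b))
    (hdec : ∀ n, ∀ x ∈ Set.Icc a b, f (n + 1) x ≤ f n x)
    (hpt : ∀ x ∈ Set.Icc a b, Tendsto (fun n => f n x) atTop (𝓝 (g x))) :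
    ContinuousOn g (Set.Icc a b) ∧ ConcaveOn ℝ (Set.Icc a b) g := by
  -- the sequence is antitone at each point of the interval
  have hanti : ∀ x ∈ Set.Icc a b, ∀ m n : ℕ, m ≤ n → f n x ≤ f m x := by
    intro x hx m n hmn
    induction n with
    | zero => simp_all
    | succ k ih =>
      rcases Nat.lt_or_ge m (k+1) with h | h
      · exact (hdec k x hx).trans (ih (Nat.lt_succ_iff.mp h))
      · have : m = k + 1 := le_antisymm (by omega) h
        subst this; rfl
  -- g ≤ f n on the interval
  have hle : ∀ n, ∀ x ∈ Set.Icc a b, g x ≤ f n x := by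
    intro n x hx
    refine le_of_tendsto (hpt x hx) ?_
    filter_upwards [eventually_ge_atTop n] with m hm
    exact hanti x hx n m hm
  -- concavity of the limit
  have hg_conc : ConcaveOn ℝ (Set.Icc a b) g := by
    refine ⟨convex_Icc a b, ?_⟩
    intro x hx y hy p q hp hq hpq
    have hmem : p • x + q • y ∈ Set.Icc a b := (convex_Icc a b) hx hy hp hq hpq
    refine le_of_tendsto_of_tendsto'
      (((hpt x hx).const_mul p).add ((hpt y hy).const_mul q)) (hpt _ hmem) ?_
    intro n
    simpa [smul_eq_mul] using (hconc n).2 hx hy hp hq hpq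
  refine ⟨?_, hg_conc⟩
  -- continuity
  intro x₀ hx₀
  rcases eq_or_lt_of_le hab with rfl | hab'
  · -- degenerate interval
    have hs : Set.Icc a a = {a} := Set.Icc_self a
    have hx : x₀ = a := by simpa [hs] using hx₀
    subst hx
    rw [ContinuousWithinAt, hs, nhdsWithin_singleton]
    simpa using tendsto_pure_nhds g x₀
  by_cases hint : x₀ ∈ Set.Ioo a b
  · -- interior point: concave functions are continuous on the interior
    have h1 : ContinuousOn g (interior (Set.Icc a b)) := hg_conc.continuousOn_interior
    rw [interior_Icc] at h1
    exact ((h1.continuousAt (isOpen_Ioo.mem_nhds hint)).continuousWithinAt)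
  · -- endpoint
    have hend : x₀ = a ∨ x₀ = b := by
      rcases hx₀ with ⟨h1, h2⟩
      rcases lt_or_eq_of_le h1 with h1' | h1'
      · right; rcases lt_or_eq_of_le h2 with h2' | h2'
        · exact absurd ⟨h1', h2'⟩ hint
        · exact h2'
      · left; exact h1'.symm
    rw [ContinuousWithinAt, tendsto_order]
    set L : ℝ → ℝ := fun x => ((b - x) / (b - a)) * g a + ((x - a) / (b - a)) * g b with hLdef
    have hba : (0:ℝ) < b - a := by linarith
    have hLcont : Continuous L := by fun_prop (disch := intro _; positivity)
    have hchord : ∀ x ∈ Set.Icc a b, L x ≤ g x := by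
      intro x hx
      have hp : (0:ℝ) ≤ (b - x) / (b - a) := by
        apply div_nonneg (by linarith [hx.2]) hba.le
      have hq : (0:ℝ) ≤ (x - a) / (b - a) := by
        apply div_nonneg (by linarith [hx.1]) hba.le
      have hpq : (b - x) / (b - a) + (x - a) / (b - a) = 1 := by
        field_simp
        ring
      have hcomb : ((b - x) / (b - a)) • a + ((x - a) / (b - a)) • b = x := by
        simp only [smul_eq_mul]; field_simp
        ring
      have := hg_conc.2 (Set.left_mem_Icc.mpr hab) (Set.right_mem_Icc.mpr hab) hp hq hpq
      rw [hcomb] at this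
      simpa [L, smul_eq_mul] using this
    have hLx₀ : L x₀ = g x₀ := by
      rcases hend with rfl | rfl <;> simp [L] <;> field_simp
    constructor
    · intro y hy
      have hLt : Tendsto L (𝓝[Set.Icc a b] x₀) (𝓝 (L x₀)) :=
        (hLcont.tendsto x₀).mono_left nhdsWithin_le_nhds
      have hev : ∀ᶠ x in 𝓝[Set.Icc a b] x₀, y < L x :=
        hLt.eventually (eventually_gt_nhds (by rw [hLx₀]; exact hy))
      filter_upwards [hev, self_mem_nhdsWithin] with x h1 h2
      exact lt_of_lt_of_le h1 (hchord x h2)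
    · intro y hy
      have : ∀ᶠ n in atTop, f n x₀ < y := (hpt x₀ hx₀).eventually (eventually_lt_nhds hy)
      obtain ⟨n, hn⟩ := this.exists
      have hcn : Tendsto (f n) (𝓝[Set.Icc a b] x₀) (𝓝 (f n x₀)) := hcont n x₀ hx₀
      have hev : ∀ᶠ x in 𝓝[Set.Icc a b] x₀, f n x < y :=
        hcn.eventually (eventually_lt_nhds hn)
      filter_upwards [hev, self_mem_nhdsWithin] with x h1 h2
      exact lt_of_le_of_lt (hle n x h2) h1
end

section
/- Let (f_n) be a sequence of continuous convex functions on [a,b] converging pointwise to f with |f(x)| < ∞ for all x ∈ [a,b]. Then for every relatively open subset F ⊆ [a,b], lim_{n→∞} inf_{x∈F} f_n(x) = inf_{x∈F} f(x). -/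
open Filter
open scoped Topology

private lemma convex_lower {a b : ℝ} {φ : ℝ → ℝ} (hconv : ConvexOn ℝ (Set.Icc a b) φ)
    {x u v : ℝ} (hx : x ∈ Set.Icc a b) (hv : v ∈ Set.Icc a b)
    (h1 : x < u) (h2 : u < v) :
    φ u - (u - x) * ((φ v - φ u) / (v - u)) ≤ φ x := by
  have hs := hconv.slope_mono_adjacent hx hv h1 h2
  rw [div_le_iff₀ (sub_pos.2 h1)] at hs
  linarith

private lemma left_aux {a b m ε : ℝ} (hab : a < b) {f : ℕ → ℝ → ℝ} {g : ℝ → ℝ}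
    (hconv : ∀ n, ConvexOn ℝ (Set.Icc a b) (f n))
    (hpt : ∀ x ∈ Set.Icc a b, Tendsto (fun n => f n x) atTop (𝓝 (g x)))
    {F : Set ℝ} (hFsub : F ⊆ Set.Icc a b) (hm : ∀ x ∈ F, m ≤ g x)
    (hdich : (∀ t, a < t → ∃ x ∈ F, a < x ∧ x < t) ∨ ∃ t, a < t ∧ ∀ x ∈ F, ¬ x < t)
    (hε : 0 < ε) (hε1 : ε ≤ 1) :
    ∃ c, a < c ∧ c < b ∧ ∀ᶠ n in atTop, ∀ x ∈ F, x ≤ c → m - ε ≤ f n x := by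
  rcases hdich with hA | ⟨t, hat, hFt⟩
  · obtain ⟨d, hdF, had, hdb⟩ := hA b hab
    have hgd := hm d hdF
    have hpos : 0 < ε * (d - a) / (8 * (g d - m + 1)) :=
      div_pos (mul_pos hε (by linarith)) (by linarith)
    obtain ⟨c, hcF, hac, hcτ⟩ := hA (min ((a + d) / 2) (a + ε * (d - a) / (8 * (g d - m + 1))))
      (lt_min (by linarith) (by linarith))
    have hc1 : c < (a + d) / 2 := lt_of_lt_of_le hcτ (min_le_left _ _)
    have hc2 : c ≤ a + ε * (d - a) / (8 * (g d - m + 1)) :=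
      le_of_lt (lt_of_lt_of_le hcτ (min_le_right _ _))
    have hcd : c < d := by linarith
    have hdc : (d - a) / 2 ≤ d - c := by linarith
    have h8 : (c - a) * (8 * (g d - m + 1)) ≤ ε * (d - a) := by
      rw [← le_div_iff₀ (by linarith)]
      linarith
    refine ⟨c, hac, lt_trans hcd hdb, ?_⟩
    have evc : ∀ᶠ n in atTop, f n c ∈ Set.Icc (g c - ε / 4) (g c + ε / 4) :=
      (hpt c (hFsub hcF)) (Icc_mem_nhds (by linarith) (by linarith))
    have evd : ∀ᶠ n in atTop, f n d ∈ Set.Icc (g d - ε / 4) (g d + ε / 4) :=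
      (hpt d (hFsub hdF)) (Icc_mem_nhds (by linarith) (by linarith))
    filter_upwards [evc, evd] with n hnc hnd x hxF hxc
    simp only [Set.mem_Icc] at hnc hnd
    have hgc := hm c hcF
    have hxab := hFsub hxF
    rcases eq_or_lt_of_le hxc with rfl | hxc'
    · linarith [hnc.1]
    · have low := convex_lower (hconv n) hxab (hFsub hdF) hxc' hcd
      have hax : a ≤ x := hxab.1
      rcases le_or_gt ((f n d - f n c) / (d - c)) 0 with hS | hS
      · have hnp : (c - x) * ((f n d - f n c) / (d - c)) ≤ 0 :=
          mul_nonpos_of_nonneg_of_nonpos (by linarith) hS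
        linarith [hnc.1]
      · have hb1 : (c - x) * ((f n d - f n c) / (d - c)) ≤
            (c - a) * ((f n d - f n c) / (d - c)) :=
          mul_le_mul_of_nonneg_right (by linarith) hS.le
        have hb2 : (c - a) * ((f n d - f n c) / (d - c)) ≤ ε / 4 := by
          rw [← mul_div_assoc, div_le_iff₀ (by linarith : (0:ℝ) < d - c)]
          have k1 : f n d - f n c ≤ (g d - m) + 1 := by linarith [hnd.2, hnc.1]
          have k2 : (c - a) * (f n d - f n c) ≤ (c - a) * ((g d - m) + 1) :=
            mul_le_mul_of_nonneg_left k1 (by linarith)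
          have k3 : ε * (d - a) ≤ ε * (2 * (d - c)) :=
            mul_le_mul_of_nonneg_left (by linarith) hε.le
          nlinarith [k2, h8, k3]
        linarith [hnc.1]
  · refine ⟨min ((a + t) / 2) ((a + b) / 2), lt_min (by linarith) (by linarith),
      lt_of_le_of_lt (min_le_right _ _) (by linarith), ?_⟩
    filter_upwards with n x hxF hxc
    exact absurd (lt_of_le_of_lt (hxc.trans (min_le_left _ _)) (by linarith)) (hFt x hxF)

private lemma right_aux {a b m ε : ℝ} (hab : a < b) {f : ℕ → ℝ → ℝ} {g : ℝ → ℝ}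
    (hconv : ∀ n, ConvexOn ℝ (Set.Icc a b) (f n))
    (hpt : ∀ x ∈ Set.Icc a b, Tendsto (fun n => f n x) atTop (𝓝 (g x)))
    {F : Set ℝ} (hFsub : F ⊆ Set.Icc a b) (hm : ∀ x ∈ F, m ≤ g x)
    (hdich : (∀ t, t < b → ∃ x ∈ F, x < b ∧ t < x) ∨ ∃ t, t < b ∧ ∀ x ∈ F, ¬ t < x)
    (hε : 0 < ε) (hε1 : ε ≤ 1) :
    ∃ c, a < c ∧ c < b ∧ ∀ᶠ n in atTop, ∀ x ∈ F, c ≤ x → m - ε ≤ f n x := by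
  have hr : ∀ x ∈ Set.Icc a b, a + b - x ∈ Set.Icc a b := by
    intro x hx
    simp only [Set.mem_Icc] at hx ⊢
    constructor <;> linarith [hx.1, hx.2]
  have hconv' : ∀ n, ConvexOn ℝ (Set.Icc a b) (fun x => f n (a + b - x)) := by
    intro n
    refine ⟨convex_Icc a b, fun x hx y hy p q hp hq hpq => ?_⟩
    have e : a + b - (p • x + q • y) = p • (a + b - x) + q • (a + b - y) := by
      simp only [smul_eq_mul]
      have haux : p * (a + b) + q * (a + b) = a + b := by
        rw [← add_mul, hpq, one_mul]
      linarith
    show f n (a + b - (p • x + q • y)) ≤ _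
    rw [e]
    exact (hconv n).2 (hr x hx) (hr y hy) hp hq hpq
  have hFsub' : (fun x => a + b - x) ⁻¹' F ⊆ Set.Icc a b := by
    intro x hx
    have := hFsub hx
    simp only [Set.mem_Icc] at this ⊢
    constructor <;> linarith [this.1, this.2]
  have hdich' : (∀ t, a < t → ∃ x ∈ (fun x => a + b - x) ⁻¹' F, a < x ∧ x < t) ∨
      ∃ t, a < t ∧ ∀ x ∈ (fun x => a + b - x) ⁻¹' F, ¬ x < t := by
    rcases hdich with hA | ⟨t, htb, hFt⟩
    · left
      intro t hat
      obtain ⟨y, hyF, hyb, hty⟩ := hA (a + b - t) (by linarith)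
      refine ⟨a + b - y, ?_, by linarith, by linarith⟩
      simp only [Set.mem_preimage]
      rw [show a + b - (a + b - y) = y by ring]
      exact hyF
    · right
      exact ⟨a + b - t, by linarith, fun x hx hlt => hFt _ hx (by simpa using by linarith)⟩
  obtain ⟨c, hac, hcb, ev⟩ := left_aux hab hconv'
    (fun x hx => hpt _ (hr x hx)) hFsub' (fun x hx => hm _ hx) hdich' hε hε1
  refine ⟨a + b - c, by linarith, by linarith, ?_⟩
  filter_upwards [ev] with n hn x hxF hcx
  have hx' : (a + b - x) ∈ (fun x => a + b - x) ⁻¹' F := by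
    simp only [Set.mem_preimage]
    rw [show a + b - (a + b - x) = x by ring]
    exact hxF
  have := hn (a + b - x) hx' (by linarith)
  simpa only [show a + b - (a + b - x) = x from by ring] using this

private lemma mid_aux {a b m ε c d : ℝ} {f : ℕ → ℝ → ℝ} {g : ℝ → ℝ}
    (hconv : ∀ n, ConvexOn ℝ (Set.Icc a b) (f n))
    (hpt : ∀ x ∈ Set.Icc a b, Tendsto (fun n => f n x) atTop (𝓝 (g x)))
    (hgc : ContinuousOn g (Set.Ioo a b))
    {F : Set ℝ} (hFsub : F ⊆ Set.Icc a b) (hm : ∀ x ∈ F, m ≤ g x)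
    (hε : 0 < ε) (hac : a < c) (hdb : d < b) :
    ∀ᶠ n in atTop, ∀ x ∈ F, c ≤ x → x ≤ d → m - ε ≤ f n x := by
  rcases lt_or_ge d c with hdc | hcd
  · filter_upwards with n x _ h1 h2
    exact absurd (h1.trans h2) (not_le.2 hdc)
  have hKsub : Set.Icc c ((d + b) / 2) ⊆ Set.Ioo a b := fun x hx =>
    ⟨lt_of_lt_of_le hac hx.1, lt_of_le_of_lt hx.2 (by linarith)⟩
  have huc := isCompact_Icc.uniformContinuousOn_of_continuous (hgc.mono hKsub)
  rw [Metric.uniformContinuousOn_iff] at huc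
  obtain ⟨δ, hδ, H⟩ := huc (ε / 8) (by linarith)
  obtain ⟨h, h0, hhδ, hhd⟩ : ∃ h : ℝ, 0 < h ∧ h ≤ δ / 4 ∧ h ≤ (b - d) / 8 :=
    ⟨min (δ / 4) ((b - d) / 8), lt_min (by linarith) (by linarith), min_le_left _ _,
      min_le_right _ _⟩
  obtain ⟨N, hNle⟩ : ∃ N : ℕ, (N : ℝ) ≤ (d - c) / h + 1 ∧ (d - c) / h ≤ N :=
    ⟨Nat.ceil ((d - c) / h),
      le_of_lt (Nat.ceil_lt_add_one (div_nonneg (by linarith) h0.le)), Nat.le_ceil _⟩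
  have htmem : ∀ i ∈ Finset.range (N + 3), c + (i : ℝ) * h ∈ Set.Icc a b := by
    intro i hi
    simp only [Finset.mem_range] at hi
    have hiN : (i : ℝ) ≤ (N : ℝ) + 2 := by exact_mod_cast Nat.le_of_lt_succ hi
    have h1 : (i : ℝ) * h ≤ ((N : ℝ) + 2) * h := mul_le_mul_of_nonneg_right hiN h0.le
    have h2 : ((N : ℝ) + 2) * h ≤ ((d - c) / h + 3) * h :=
      mul_le_mul_of_nonneg_right (by linarith [hNle.1]) h0.le
    have h3 : ((d - c) / h + 3) * h = (d - c) + 3 * h := by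
      field_simp
    have h4 : 0 ≤ (i : ℝ) * h := mul_nonneg (Nat.cast_nonneg i) h0.le
    constructor <;> linarith
  have hgrid : ∀ᶠ n in atTop, ∀ i ∈ Finset.range (N + 3),
      f n (c + (i : ℝ) * h) ∈ Set.Icc (g (c + (i : ℝ) * h) - ε / 8) (g (c + (i : ℝ) * h) + ε / 8) := by
    rw [eventually_all_finset]
    intro i hi
    exact (hpt _ (htmem i hi)) (Icc_mem_nhds (by linarith) (by linarith))
  filter_upwards [hgrid] with n hn x hxF hcx hxd
  obtain ⟨i, hi1, hi2, hiN⟩ : ∃ i : ℕ, (i : ℝ) * h ≤ x - c ∧ x - c < ((i : ℝ) + 1) * h ∧ i ≤ N := by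
    refine ⟨Nat.floor ((x - c) / h), ?_, ?_, ?_⟩
    · exact (le_div_iff₀ h0).1 (Nat.floor_le (div_nonneg (by linarith) h0.le))
    · exact (div_lt_iff₀ h0).1 (Nat.lt_floor_add_one _)
    · calc Nat.floor ((x - c) / h) ≤ Nat.floor ((d - c) / h) :=
            Nat.floor_mono ((div_le_div_iff_of_pos_right h0).2 (by linarith))
        _ ≤ N := by
            have hfm : Nat.floor ((d - c) / h) ≤ Nat.floor ((N : ℝ)) := Nat.floor_mono hNle.2
            simpa using hfm
  have hi0 : (0 : ℝ) ≤ (i : ℝ) := Nat.cast_nonneg i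
  have him : 0 ≤ (i : ℝ) * h := mul_nonneg hi0 h0.le
  have hfu := hn (i + 1) (Finset.mem_range.2 (by omega))
  have hfv := hn (i + 2) (Finset.mem_range.2 (by omega))
  push_cast at hfu hfv
  simp only [Set.mem_Icc] at hfu hfv
  have hxab : x ∈ Set.Icc a b := hFsub hxF
  have hxab' := hxab
  simp only [Set.mem_Icc] at hxab'
  have huab : c + ((i : ℝ) + 1) * h ∈ Set.Icc a b := by
    constructor <;> linarith
  have hvab : c + ((i : ℝ) + 2) * h ∈ Set.Icc a b := by
    constructor <;> linarith
  have hxu : x < c + ((i : ℝ) + 1) * h := by linarith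
  have huv : c + ((i : ℝ) + 1) * h < c + ((i : ℝ) + 2) * h := by linarith
  have hxK : x ∈ Set.Icc c ((d + b) / 2) := ⟨hcx, by linarith⟩
  have huK : c + ((i : ℝ) + 1) * h ∈ Set.Icc c ((d + b) / 2) := by
    constructor <;> linarith
  have hvK : c + ((i : ℝ) + 2) * h ∈ Set.Icc c ((d + b) / 2) := by
    constructor <;> linarith
  have e1 : |g (c + ((i : ℝ) + 1) * h) - g x| < ε / 8 := by
    have := H _ huK x hxK (by
      rw [Real.dist_eq, abs_of_pos (by linarith)]
      linarith)
    rwa [Real.dist_eq] at this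
  have e2 : |g (c + ((i : ℝ) + 2) * h) - g (c + ((i : ℝ) + 1) * h)| < ε / 8 := by
    have := H _ hvK _ huK (by
      rw [Real.dist_eq, abs_of_pos (by linarith)]
      linarith)
    rwa [Real.dist_eq] at this
  obtain ⟨e1a, e1b⟩ := abs_lt.1 e1
  obtain ⟨e2a, e2b⟩ := abs_lt.1 e2
  have low := convex_lower (hconv n) hxab hvab hxu huv
  rw [show c + ((i : ℝ) + 2) * h - (c + ((i : ℝ) + 1) * h) = h from by ring] at low
  have hmx := hm x hxF
  set A := f n (c + ((i : ℝ) + 1) * h) with hA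
  set B := f n (c + ((i : ℝ) + 2) * h) with hB
  have hux : c + ((i : ℝ) + 1) * h - x ≤ h := by linarith
  rcases le_or_gt ((B - A) / h) 0 with hS | hS
  · have hnp : (c + ((i : ℝ) + 1) * h - x) * ((B - A) / h) ≤ 0 :=
      mul_nonpos_of_nonneg_of_nonpos (by linarith) hS
    linarith [hfu.1]
  · have hprod : (c + ((i : ℝ) + 1) * h - x) * ((B - A) / h) ≤ B - A := by
      have h1 : (c + ((i : ℝ) + 1) * h - x) * ((B - A) / h) ≤ h * ((B - A) / h) :=
        mul_le_mul_of_nonneg_right hux hS.le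
      have h2 : h * ((B - A) / h) = B - A := by
        rw [mul_comm, div_mul_cancel₀ _ h0.ne']
      linarith
    linarith [hfu.1, hfv.2]

/-- If continuous convex functions `f n` on `[a,b]` converge
pointwise to a (finite) function `f`, then for every relatively open subset
`F ⊆ [a,b]`, the infima converge: `lim_n inf_{x∈F} f_n(x) = inf_{x∈F} f(x)`. -/
theorem inf_converges_on_relatively_open
    (a b : ℝ) (hab : a ≤ b) (f : ℕ → ℝ → ℝ) (g : ℝ → ℝ)
    (hconv : ∀ n, ConvexOn ℝ (Set.Icc a b) (f n))
    (hcont : ∀ n, ContinuousOn (f n) (Set.Icc a b))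
    (hpt : ∀ x ∈ Set.Icc a b, Tendsto (fun n => f n x) atTop (𝓝 (g x)))
    (F : Set ℝ) (hFsub : F ⊆ Set.Icc a b)
    (hFopen : ∃ U : Set ℝ, IsOpen U ∧ F = U ∩ Set.Icc a b) :
    Tendsto (fun n => sInf (f n '' F)) atTop (𝓝 (sInf (g '' F))) := by
  rcases F.eq_empty_or_nonempty with rfl | hFne
  · simp only [Set.image_empty, Real.sInf_empty]
    exact tendsto_const_nhds
  rcases hab.eq_or_lt with rfl | hab'
  · have hFa : F = {a} := by
      apply Set.eq_singleton_iff_nonempty_unique_mem.2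
      exact ⟨hFne, fun x hx => by simpa using hFsub hx⟩
    simp only [hFa, Set.image_singleton, csInf_singleton]
    exact hpt a (by simp)
  -- main case a < b
  have gconv : ConvexOn ℝ (Set.Icc a b) g := by
    refine ⟨convex_Icc a b, fun x hx y hy p q hp hq hpq => ?_⟩
    have hmem : p • x + q • y ∈ Set.Icc a b := (convex_Icc a b) hx hy hp hq hpq
    have lim1 : Tendsto (fun n => p * f n x + q * f n y) atTop (𝓝 (p * g x + q * g y)) :=
      ((hpt x hx).const_mul p).add ((hpt y hy).const_mul q)
    have key := le_of_tendsto_of_tendsto' (hpt _ hmem) lim1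
      (fun n => by simpa [smul_eq_mul] using (hconv n).2 hx hy hp hq hpq)
    simpa [smul_eq_mul] using key
  have gbdd : ∀ x ∈ Set.Icc a b, 2 * g ((a + b) / 2) - max (g a) (g b) ≤ g x := by
    intro x hx
    simp only [Set.mem_Icc] at hx
    have hx' : a + b - x ∈ Set.Icc a b := by
      simp only [Set.mem_Icc]
      constructor <;> linarith [hx.1, hx.2]
    have hmid : (1 / 2 : ℝ) • x + (1 / 2 : ℝ) • (a + b - x) = (a + b) / 2 := by
      simp only [smul_eq_mul]; ring
    have h1 := gconv.2 (Set.mem_Icc.2 hx) hx' (by norm_num : (0:ℝ) ≤ 1/2)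
      (by norm_num : (0:ℝ) ≤ 1/2) (by norm_num : (1/2 : ℝ) + 1/2 = 1)
    rw [hmid] at h1
    simp only [smul_eq_mul] at h1
    have h2 : g (a + b - x) ≤ max (g a) (g b) :=
      gconv.le_on_segment (Set.left_mem_Icc.2 hab) (Set.right_mem_Icc.2 hab)
        (by rw [segment_eq_Icc hab]; exact hx')
    linarith
  have hgbddF : BddBelow (g '' F) := by
    refine ⟨2 * g ((a + b) / 2) - max (g a) (g b), ?_⟩
    rintro y ⟨x, hxF, rfl⟩
    exact gbdd x (hFsub hxF)
  set m := sInf (g '' F) with hm_def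
  have hm : ∀ x ∈ F, m ≤ g x := fun x hx => csInf_le hgbddF ⟨x, hx, rfl⟩
  have gIoo : ConvexOn ℝ (Set.Ioo a b) g := gconv.subset Set.Ioo_subset_Icc_self (convex_Ioo a b)
  have gcont : ContinuousOn g (Set.Ioo a b) := ConvexOn.continuousOn isOpen_Ioo gIoo
  obtain ⟨U, hUopen, hFU⟩ := hFopen
  have dichL : (∀ t, a < t → ∃ x ∈ F, a < x ∧ x < t) ∨ ∃ t, a < t ∧ ∀ x ∈ F, ¬ x < t := by
    by_cases hA : ∀ t, a < t → ∃ x ∈ F, a < x ∧ x < t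
    · exact Or.inl hA
    push_neg at hA
    obtain ⟨t, hat, hFt⟩ := hA
    refine Or.inr ⟨t, hat, fun x hxF hxt => ?_⟩
    have hax : a ≤ x := (hFsub hxF).1
    rcases hax.eq_or_lt with rfl | hax'
    · obtain ⟨δ, hδ, hball⟩ := Metric.isOpen_iff.1 hUopen a (by rw [hFU] at hxF; exact hxF.1)
      have hylt : 0 < min (δ / 2) (min ((t - a) / 2) ((b - a) / 2)) :=
        lt_min (by linarith) (lt_min (by linarith) (by linarith))
      have hy2 : min (δ / 2) (min ((t - a) / 2) ((b - a) / 2)) ≤ (t - a) / 2 :=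
        le_trans (min_le_right _ _) (min_le_left _ _)
      have hy3 : min (δ / 2) (min ((t - a) / 2) ((b - a) / 2)) ≤ (b - a) / 2 :=
        le_trans (min_le_right _ _) (min_le_right _ _)
      have hyU : a + min (δ / 2) (min ((t - a) / 2) ((b - a) / 2)) ∈ U := hball (by
        simp only [Metric.mem_ball, Real.dist_eq]
        rw [show a + min (δ / 2) (min ((t - a) / 2) ((b - a) / 2)) - a
          = min (δ / 2) (min ((t - a) / 2) ((b - a) / 2)) from by ring,
          abs_of_pos hylt]
        have := min_le_left (δ / 2) (min ((t - a) / 2) ((b - a) / 2))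
        linarith)
      have hyF : a + min (δ / 2) (min ((t - a) / 2) ((b - a) / 2)) ∈ F := by
        rw [hFU]
        exact ⟨hyU, Set.mem_Icc.2 ⟨by linarith, by linarith⟩⟩
      have := hFt _ hyF (by linarith)
      linarith
    · exact absurd hxt (not_lt.2 (hFt x hxF hax'))
  have dichR : (∀ t, t < b → ∃ x ∈ F, x < b ∧ t < x) ∨ ∃ t, t < b ∧ ∀ x ∈ F, ¬ t < x := by
    by_cases hA : ∀ t, t < b → ∃ x ∈ F, x < b ∧ t < x
    · exact Or.inl hA
    push_neg at hA
    obtain ⟨t, htb, hFt⟩ := hA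
    refine Or.inr ⟨t, htb, fun x hxF hxt => ?_⟩
    have hxb : x ≤ b := (hFsub hxF).2
    rcases hxb.eq_or_lt with rfl | hxb'
    · obtain ⟨δ, hδ, hball⟩ := Metric.isOpen_iff.1 hUopen x (by rw [hFU] at hxF; exact hxF.1)
      have hylt : 0 < min (δ / 2) (min ((x - t) / 2) ((x - a) / 2)) :=
        lt_min (by linarith) (lt_min (by linarith) (by linarith))
      have hy2 : min (δ / 2) (min ((x - t) / 2) ((x - a) / 2)) ≤ (x - t) / 2 :=
        le_trans (min_le_right _ _) (min_le_left _ _)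
      have hy3 : min (δ / 2) (min ((x - t) / 2) ((x - a) / 2)) ≤ (x - a) / 2 :=
        le_trans (min_le_right _ _) (min_le_right _ _)
      have hyU : x - min (δ / 2) (min ((x - t) / 2) ((x - a) / 2)) ∈ U := hball (by
        simp only [Metric.mem_ball, Real.dist_eq]
        rw [show x - min (δ / 2) (min ((x - t) / 2) ((x - a) / 2)) - x
          = -(min (δ / 2) (min ((x - t) / 2) ((x - a) / 2))) from by ring,
          abs_neg, abs_of_pos hylt]
        have := min_le_left (δ / 2) (min ((x - t) / 2) ((x - a) / 2))
        linarith)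
      have hyF : x - min (δ / 2) (min ((x - t) / 2) ((x - a) / 2)) ∈ F := by
        rw [hFU]
        exact ⟨hyU, Set.mem_Icc.2 ⟨by linarith, by linarith⟩⟩
      have := hFt _ hyF (by linarith)
      linarith
    · exact absurd hxt (not_lt.2 (hFt x hxF hxb'))
  have core : ∀ ε : ℝ, 0 < ε → ε ≤ 1 → ∀ᶠ n in atTop, ∀ x ∈ F, m - ε ≤ f n x := by
    intro ε hε hε1
    obtain ⟨c, hac, hcb, evL⟩ := left_aux hab' hconv hpt hFsub hm dichL hε hε1
    obtain ⟨d, had, hdb, evR⟩ := right_aux hab' hconv hpt hFsub hm dichR hε hε1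
    have evM := mid_aux hconv hpt gcont hFsub hm hε hac hdb
    filter_upwards [evL, evR, evM] with n h1 h2 h3 x hxF
    rcases le_total x c with hxc | hcx
    · exact h1 x hxF hxc
    rcases le_total d x with hdx | hxd
    · exact h2 x hxF hdx
    · exact h3 x hxF hcx hxd
  have bddF : ∀ n, BddBelow (f n '' F) := fun n =>
    (isCompact_Icc.bddBelow_image (hcont n)).mono (Set.image_mono (f := f n) hFsub)
  refine tendsto_order.2 ⟨fun l hl => ?_, fun u hu => ?_⟩
  · have hεpos : 0 < min ((m - l) / 2) 1 := lt_min (by linarith) one_pos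
    filter_upwards [core _ hεpos (min_le_right _ _)] with n hn
    have hinf : m - min ((m - l) / 2) 1 ≤ sInf (f n '' F) := by
      apply le_csInf (hFne.image _)
      rintro y ⟨x, hxF, rfl⟩
      exact hn x hxF
    have := min_le_left ((m - l) / 2) 1
    linarith
  · obtain ⟨y, ⟨x, hxF, rfl⟩, hyu⟩ := exists_lt_of_csInf_lt (hFne.image g) hu
    filter_upwards [(hpt x (hFsub hxF)).eventually_lt_const hyu] with n hn
    exact lt_of_le_of_lt (csInf_le (bddF n) ⟨x, hxF, rfl⟩) hn
end

section
/- For the standard Gaussian-type typical set, i.e., the Euclidean ball B_n(√(nν(1+2ε))) in ℝⁿ, the j-th intrinsic volume equals C(n,j) · (ω_n/ω_{n−j}) · (nν(1+2ε))^{j/2}, and consequently lim_{ε→0+} lim_{n→∞} (1/n) log V_{⌊nθ⌋}(B_n(√(nν(1+2ε)))) = H(θ) + (θ/2)log(2πeν) + ((1−θ)/2)log(1−θ) for θ ∈ (0,1), where H(θ) = −θ log θ − (1−θ)log(1−θ). -/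
open Filter
open scoped Topology BigOperators Nat

noncomputable def fs (x : ℝ) : ℝ := x * Real.log x - x

noncomputable def gfun (K t : ℝ) : ℝ :=
  -(t * Real.log t) - (1-t) * Real.log (1-t) + ((1-t)/2) * Real.log (1-t) + t/2 * K

lemma tendsto_log_div_atTop' : Tendsto (fun x : ℝ => Real.log x / x) atTop (𝓝 0) :=
  Real.isLittleO_log_id_atTop.tendsto_div_nhds_zero

lemma tendsto_E : Tendsto (fun n : ℕ => (Real.log (n !) - fs n) / n) atTop (𝓝 0) := by
  have h1 : Tendsto (fun n : ℕ => Real.log (Stirling.stirlingSeq n) / n) atTop (𝓝 0) :=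
    Tendsto.div_atTop ((Stirling.tendsto_stirlingSeq_sqrt_pi).log (by positivity))
      tendsto_natCast_atTop_atTop
  have hc : Tendsto (fun n : ℕ => 2 * (n : ℝ)) atTop atTop :=
    (tendsto_natCast_atTop_atTop (R := ℝ)).const_mul_atTop (by norm_num : (0:ℝ) < 2)
  have h2 : Tendsto (fun n : ℕ => 1/2 * Real.log (2 * n) / n) atTop (𝓝 0) := by
    have h3 := tendsto_log_div_atTop'.comp hc
    apply h3.congr'
    filter_upwards [eventually_ge_atTop 1] with n hn
    have hn0 : (n:ℝ) ≠ 0 := Nat.cast_ne_zero.2 (by omega)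
    simp only [Function.comp_apply]
    field_simp
  have key := h1.add h2
  rw [add_zero] at key
  apply key.congr'
  filter_upwards [eventually_ge_atTop 1] with n hn
  have hn0 : (0:ℝ) < n := by exact_mod_cast hn
  have hst := Stirling.log_stirlingSeq_formula n
  have hfs : fs n = (n:ℝ) * Real.log ((n:ℝ) / Real.exp 1) := by
    rw [fs, Real.log_div (ne_of_gt hn0) (Real.exp_ne_zero 1), Real.log_exp]; ring
  rw [hfs, hst]
  ring

lemma atTop_of_div (a : ℕ → ℕ) (c : ℝ) (hc : 0 < c)
    (ha : Tendsto (fun n : ℕ => (a n : ℝ) / n) atTop (𝓝 c)) :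
    Tendsto a atTop atTop := by
  rw [← tendsto_natCast_atTop_iff (R := ℝ)]
  apply tendsto_atTop_mono' _ _ ((tendsto_natCast_atTop_atTop (R := ℝ)).const_mul_atTop
    (by linarith : (0:ℝ) < c/2))
  filter_upwards [ha.eventually (eventually_ge_nhds (by linarith : c/2 < c)),
    eventually_ge_atTop 1] with n hn hn1
  have hn0 : (0:ℝ) < n := by exact_mod_cast hn1
  calc c/2 * (n:ℝ) ≤ (a n : ℝ)/n * n := by nlinarith
  _ = (a n : ℝ) := by field_simp

lemma tendsto_log_comp_div (a : ℕ → ℕ) (c : ℝ) (hc : 0 < c)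
    (ha : Tendsto (fun n : ℕ => (a n : ℝ) / n) atTop (𝓝 c)) :
    Tendsto (fun n : ℕ => Real.log (a n) / n) atTop (𝓝 0) := by
  have h1 : Tendsto (fun n : ℕ => Real.log (a n) / (a n) * ((a n : ℝ) / n)) atTop (𝓝 (0 * c)) :=
    Tendsto.mul (tendsto_log_div_atTop'.comp
      ((tendsto_natCast_atTop_iff (R := ℝ)).2 (atTop_of_div a c hc ha))) ha
  rw [zero_mul] at h1
  apply h1.congr'
  filter_upwards [(atTop_of_div a c hc ha).eventually (eventually_ge_atTop 1)] with n hn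
  have h0 : ((a n : ℝ)) ≠ 0 := Nat.cast_ne_zero.2 (by omega)
  field_simp

lemma tendsto_E_comp (a : ℕ → ℕ) (c : ℝ) (hc : 0 < c)
    (ha : Tendsto (fun n : ℕ => (a n : ℝ) / n) atTop (𝓝 c)) :
    Tendsto (fun n : ℕ => (Real.log ((a n)!) - fs (a n)) / n) atTop (𝓝 0) := by
  have h1 : Tendsto (fun n : ℕ => (Real.log ((a n)!) - fs (a n)) / (a n) * ((a n : ℝ) / n))
      atTop (𝓝 (0 * c)) :=
    Tendsto.mul (tendsto_E.comp (atTop_of_div a c hc ha)) ha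
  rw [zero_mul] at h1
  apply h1.congr'
  filter_upwards [(atTop_of_div a c hc ha).eventually (eventually_ge_atTop 1)] with n hn
  have h0 : ((a n : ℝ)) ≠ 0 := Nat.cast_ne_zero.2 (by omega)
  field_simp

lemma tendsto_EG_comp (a : ℕ → ℕ) (c : ℝ) (hc : 0 < c)
    (ha : Tendsto (fun n : ℕ => (a n : ℝ) / n) atTop (𝓝 c)) :
    Tendsto (fun n : ℕ =>
      (Real.log (Real.Gamma ((a n : ℝ)/2 + 1)) - fs ((a n : ℝ)/2)) / n) atTop (𝓝 0) := by
  set b : ℕ → ℕ := fun n => a n / 2 with hbdef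
  have hbc : ∀ n, 2 * (b n : ℝ) ≤ (a n : ℝ) ∧ (a n : ℝ) ≤ 2 * (b n : ℝ) + 1 := by
    intro n
    have h1 : 2 * (a n / 2) ≤ a n := by omega
    have h2 : a n ≤ 2 * (a n / 2) + 1 := by omega
    exact ⟨by exact_mod_cast h1, by exact_mod_cast h2⟩
  have hb : Tendsto (fun n : ℕ => (b n : ℝ) / n) atTop (𝓝 (c / 2)) := by
    have hlow : Tendsto (fun n : ℕ => ((a n : ℝ)/n - 1/n)/2) atTop (𝓝 (c/2)) := by
      have := (ha.sub tendsto_one_div_atTop_nhds_zero_nat).div_const 2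
      simpa using this
    apply tendsto_of_tendsto_of_tendsto_of_le_of_le' hlow (ha.div_const 2)
    · filter_upwards [eventually_ge_atTop 1] with n hn
      have hn0 : (0:ℝ) < n := by exact_mod_cast hn
      calc ((a n : ℝ)/n - 1/n)/2 = ((a n : ℝ) - 1)/2/n := by ring
      _ ≤ (b n : ℝ)/n := (div_le_div_iff_of_pos_right hn0).2 (by linarith [(hbc n).2])
    · filter_upwards [eventually_ge_atTop 1] with n hn
      have hn0 : (0:ℝ) < n := by exact_mod_cast hn
      calc (b n : ℝ)/n ≤ (a n : ℝ)/2/n := (div_le_div_iff_of_pos_right hn0).2 (by linarith [(hbc n).1])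
      _ = ((a n : ℝ)/n)/2 := by ring
  have haT : Tendsto a atTop atTop := atTop_of_div a c hc ha
  have hb1 : Tendsto (fun n : ℕ => ((b n + 1 : ℕ) : ℝ) / n) atTop (𝓝 (c/2)) := by
    have := hb.add tendsto_one_div_atTop_nhds_zero_nat
    rw [add_zero] at this
    apply this.congr
    intro n; push_cast; ring
  -- T1
  have hT1 : Tendsto (fun n : ℕ =>
      (Real.log (Real.Gamma ((a n : ℝ)/2 + 1)) - Real.log ((b n)!)) / n) atTop (𝓝 0) := by
    apply tendsto_of_tendsto_of_tendsto_of_le_of_le' tendsto_const_nhds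
      (tendsto_log_comp_div (fun n => b n + 1) (c/2) (by linarith) hb1)
    · filter_upwards [haT.eventually (eventually_ge_atTop 2)] with n hn
      have hbn : b n = a n / 2 := rfl
      have hb1' : 1 ≤ b n := by omega
      have hB : (1:ℝ) ≤ (b n : ℝ) := by exact_mod_cast hb1'
      have hmono := Real.Gamma_strictMonoOn_Ici.monotoneOn
      have h1 : Real.Gamma ((b n : ℝ) + 1) ≤ Real.Gamma ((a n : ℝ)/2 + 1) := by
        apply hmono (by simp only [Set.mem_Ici]; linarith) (by simp only [Set.mem_Ici]; linarith [(hbc n).1])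
        linarith [(hbc n).1]
      rw [Real.Gamma_nat_eq_factorial] at h1
      have hfac : (0:ℝ) < ((b n)! : ℝ) := by exact_mod_cast (b n).factorial_pos
      have hlog := Real.log_le_log hfac h1
      have hn0 : (0:ℝ) ≤ (n:ℝ) := by positivity
      exact div_nonneg (by linarith) hn0
    · filter_upwards [haT.eventually (eventually_ge_atTop 2)] with n hn
      have hbn : b n = a n / 2 := rfl
      have hb1' : 1 ≤ b n := by omega
      have hB : (1:ℝ) ≤ (b n : ℝ) := by exact_mod_cast hb1'
      have hmono := Real.Gamma_strictMonoOn_Ici.monotoneOn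
      have h2 : Real.Gamma ((a n : ℝ)/2 + 1) ≤ Real.Gamma ((b n : ℝ) + 2) := by
        apply hmono (by simp only [Set.mem_Ici]; linarith [(hbc n).1])
          (by simp only [Set.mem_Ici]; linarith)
        linarith [(hbc n).2]
      have hcast : (b n : ℝ) + 2 = (((b n + 1 : ℕ)) : ℝ) + 1 := by push_cast; ring
      rw [hcast, Real.Gamma_nat_eq_factorial] at h2
      have hGpos : (0:ℝ) < Real.Gamma ((a n : ℝ)/2 + 1) :=
        Real.Gamma_pos_of_pos (by positivity)
      have hlog := Real.log_le_log hGpos h2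
      have hfaceq : ((b n + 1)! : ℝ) = ((b n + 1 : ℕ) : ℝ) * ((b n)! : ℝ) := by
        rw [Nat.factorial_succ]; push_cast; ring
      have hfacpos : (0:ℝ) < ((b n)! : ℝ) := by exact_mod_cast (b n).factorial_pos
      have hbp : (0:ℝ) < ((b n + 1 : ℕ) : ℝ) := by positivity
      rw [hfaceq, Real.log_mul (ne_of_gt hbp) (ne_of_gt hfacpos)] at hlog
      have hn0 : (0:ℝ) ≤ (n:ℝ) := by positivity
      have : Real.log (Real.Gamma ((a n : ℝ)/2 + 1)) - Real.log ((b n)!)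
          ≤ Real.log ((b n + 1 : ℕ) : ℝ) := by linarith
      exact div_le_div_of_nonneg_right this hn0
  -- T3
  have hT3 : Tendsto (fun n : ℕ => (fs (b n) - fs ((a n : ℝ)/2)) / n) atTop (𝓝 0) := by
    have hup : Tendsto (fun n : ℕ => (1:ℝ)/2 * (1/n)) atTop (𝓝 0) := by
      have := tendsto_one_div_atTop_nhds_zero_nat.const_mul (1/2 : ℝ)
      simpa using this
    have hlo : Tendsto (fun n : ℕ => -((1:ℝ)/2 * (Real.log (a n) / n))) atTop (𝓝 0) := by
      have := ((tendsto_log_comp_div a c hc ha).const_mul (1/2 : ℝ)).neg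
      simpa using this
    apply tendsto_of_tendsto_of_tendsto_of_le_of_le' hlo hup
    · filter_upwards [haT.eventually (eventually_ge_atTop 2), eventually_ge_atTop 1]
        with n hn hn1
      have hn0 : (0:ℝ) < n := by exact_mod_cast hn1
      have hbn : b n = a n / 2 := rfl
      have hb1' : 1 ≤ b n := by omega
      have hB : (1:ℝ) ≤ (b n : ℝ) := by exact_mod_cast hb1'
      set B := (b n : ℝ)
      set x := (a n : ℝ)/2 with hxdef
      have hx1 : B ≤ x := by rw [hxdef]; linarith [(hbc n).1]
      have hx2 : x ≤ B + 1/2 := by rw [hxdef]; linarith [(hbc n).2]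
      have hxpos : (1:ℝ) ≤ x := le_trans hB hx1
      have hlogB : (0:ℝ) ≤ Real.log B := Real.log_nonneg hB
      have hlogx : (0:ℝ) ≤ Real.log x := Real.log_nonneg hxpos
      have hlogmono : Real.log B ≤ Real.log x := Real.log_le_log (by linarith) hx1
      have hlogxa : Real.log x ≤ Real.log (a n) := by
        apply Real.log_le_log (by linarith)
        have : (0:ℝ) ≤ (a n : ℝ) := by positivity
        rw [hxdef]; linarith
      have hlogsub : Real.log x - Real.log B ≤ (x - B)/B := by
        have h0 : (0:ℝ) < x / B := by positivity
        have := Real.log_le_sub_one_of_pos h0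
        rw [Real.log_div (by linarith) (by linarith)] at this
        have hBpos : (0:ℝ) < B := by linarith
        calc Real.log x - Real.log B ≤ x/B - 1 := this
        _ = (x - B)/B := by field_simp
      have key : fs B - fs x ≥ -(Real.log (a n)/2) := by
        rw [fs, fs]
        have hBpos : (0:ℝ) < B := by linarith
        have h2 : B * (Real.log x - Real.log B) ≤ x - B := by
          calc B * (Real.log x - Real.log B) ≤ B * ((x - B)/B) := by nlinarith
          _ = x - B := by field_simp
        nlinarith
      rw [ge_iff_le] at key
      calc -((1:ℝ)/2 * (Real.log (a n)/n)) = (-(Real.log (a n)/2))/n := by ring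
      _ ≤ (fs B - fs x)/n := (div_le_div_iff_of_pos_right hn0).2 key
    · filter_upwards [haT.eventually (eventually_ge_atTop 2), eventually_ge_atTop 1]
        with n hn hn1
      have hn0 : (0:ℝ) < n := by exact_mod_cast hn1
      have hbn : b n = a n / 2 := rfl
      have hb1' : 1 ≤ b n := by omega
      have hB : (1:ℝ) ≤ (b n : ℝ) := by exact_mod_cast hb1'
      set B := (b n : ℝ)
      set x := (a n : ℝ)/2 with hxdef
      have hx1 : B ≤ x := by rw [hxdef]; linarith [(hbc n).1]
      have hx2 : x ≤ B + 1/2 := by rw [hxdef]; linarith [(hbc n).2]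
      have hlogB : (0:ℝ) ≤ Real.log B := Real.log_nonneg hB
      have hlogmono : Real.log B ≤ Real.log x := Real.log_le_log (by linarith) hx1
      have key : fs B - fs x ≤ 1/2 := by
        rw [fs, fs]
        nlinarith
      calc (fs B - fs x)/n ≤ (1/2 : ℝ)/n := (div_le_div_iff_of_pos_right hn0).2 key
      _ = 1/2 * (1/n) := by ring
  -- T2
  have hT2 := tendsto_E_comp b (c/2) (by linarith) hb
  have hsum := (hT1.add hT2).add hT3
  simp only [add_zero] at hsum
  apply hsum.congr
  intro n
  ring

lemma gfun_contAt (K θ : ℝ) (h0 : 0 < θ) (h1 : θ < 1) : ContinuousAt (gfun K) θ := by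
  have hl1 : ContinuousAt Real.log θ := Real.continuousAt_log (ne_of_gt h0)
  have hsub : ContinuousAt (fun t : ℝ => 1 - t) θ :=
    (continuous_const.sub continuous_id).continuousAt
  have hl2 : ContinuousAt (fun t : ℝ => Real.log (1 - t)) θ :=
    (Real.continuousAt_log (ne_of_gt (by linarith : (0:ℝ) < 1 - θ))).comp hsub
  exact (((continuousAt_id.mul hl1).neg.sub (hsub.mul hl2)).add
    ((hsub.div_const 2).mul hl2)).add ((continuousAt_id.div_const 2).mul continuousAt_const)

lemma identity_step (ν θ ε : ℝ) (hν : 0 < ν) (hε : 0 < ε) (n jn : ℕ)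
    (hn : 1 ≤ n) (hj1 : 1 ≤ jn) (hm1 : jn + 1 ≤ n) :
    (1/(n:ℝ)) * Real.log ((n.choose jn : ℝ) *
      ((Real.pi ^ ((n:ℝ)/2) / Real.Gamma ((n:ℝ)/2+1)) /
        (Real.pi ^ (((n - jn : ℕ):ℝ)/2) / Real.Gamma (((n - jn:ℕ):ℝ)/2+1))) *
      (Real.sqrt ((n:ℝ)*ν*(1+2*ε))) ^ jn)
    = gfun (Real.log 2 + Real.log Real.pi + 1 + Real.log (ν*(1+2*ε))) ((jn:ℝ)/n)
      + (Real.log (n !) - fs n)/n - (Real.log (jn !) - fs jn)/n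
      - (Real.log ((n - jn)!) - fs ((n - jn:ℕ)))/n
      - (Real.log (Real.Gamma ((n:ℝ)/2+1)) - fs ((n:ℝ)/2))/n
      + (Real.log (Real.Gamma (((n - jn:ℕ):ℝ)/2+1)) - fs (((n - jn:ℕ):ℝ)/2))/n := by
  have hjle : jn ≤ n := by omega
  have hm : ((n - jn : ℕ):ℝ) = (n:ℝ) - (jn:ℝ) := by
    push_cast [Nat.cast_sub hjle]; ring
  have hNpos : (0:ℝ) < n := by exact_mod_cast hn
  have hJpos : (0:ℝ) < jn := by exact_mod_cast hj1
  have hMpos : (0:ℝ) < ((n - jn : ℕ):ℝ) := by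
    have : 1 ≤ n - jn := by omega
    exact_mod_cast this
  have hXpos : (0:ℝ) < (n:ℝ)*ν*(1+2*ε) := by positivity
  have hrpos : (0:ℝ) < Real.sqrt ((n:ℝ)*ν*(1+2*ε)) := Real.sqrt_pos.2 hXpos
  have hG1 : (0:ℝ) < Real.Gamma ((n:ℝ)/2+1) := Real.Gamma_pos_of_pos (by positivity)
  have hG2 : (0:ℝ) < Real.Gamma (((n - jn:ℕ):ℝ)/2+1) := Real.Gamma_pos_of_pos (by positivity)
  have hp1 : (0:ℝ) < Real.pi ^ ((n:ℝ)/2) := Real.rpow_pos_of_pos Real.pi_pos _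
  have hp2 : (0:ℝ) < Real.pi ^ (((n - jn:ℕ):ℝ)/2) := Real.rpow_pos_of_pos Real.pi_pos _
  have hω1 : (0:ℝ) < Real.pi ^ ((n:ℝ)/2) / Real.Gamma ((n:ℝ)/2+1) := div_pos hp1 hG1
  have hω2 : (0:ℝ) < Real.pi ^ (((n - jn:ℕ):ℝ)/2) / Real.Gamma (((n - jn:ℕ):ℝ)/2+1) :=
    div_pos hp2 hG2
  have hA : (0:ℝ) < (n.choose jn : ℝ) := by exact_mod_cast Nat.choose_pos hjle
  have hfn : (0:ℝ) < (n ! : ℝ) := by exact_mod_cast n.factorial_pos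
  have hfj : (0:ℝ) < (jn ! : ℝ) := by exact_mod_cast jn.factorial_pos
  have hfm : (0:ℝ) < ((n - jn)! : ℝ) := by exact_mod_cast (n - jn).factorial_pos
  rw [Real.log_mul (ne_of_gt (mul_pos hA (div_pos hω1 hω2))) (ne_of_gt (pow_pos hrpos jn)),
    Real.log_mul (ne_of_gt hA) (ne_of_gt (div_pos hω1 hω2)),
    Real.log_div (ne_of_gt hω1) (ne_of_gt hω2),
    Real.log_div (ne_of_gt hp1) (ne_of_gt hG1),
    Real.log_div (ne_of_gt hp2) (ne_of_gt hG2),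
    Real.log_rpow Real.pi_pos, Real.log_rpow Real.pi_pos,
    Real.log_pow, Real.log_sqrt hXpos.le,
    Nat.cast_choose ℝ hjle,
    Real.log_div (ne_of_gt hfn) (ne_of_gt (mul_pos hfj hfm)),
    Real.log_mul (ne_of_gt hfj) (ne_of_gt hfm),
    Real.log_mul (ne_of_gt (mul_pos hNpos hν)) (by positivity : (1+2*ε : ℝ) ≠ 0),
    Real.log_mul (ne_of_gt hNpos) (ne_of_gt hν)]
  simp only [gfun, fs]
  rw [show (1:ℝ) - (jn:ℝ)/n = ((n - jn:ℕ):ℝ)/n by rw [hm]; field_simp,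
    Real.log_div (ne_of_gt hJpos) (ne_of_gt hNpos),
    Real.log_div (ne_of_gt hMpos) (ne_of_gt hNpos),
    Real.log_div (ne_of_gt hNpos) (two_ne_zero),
    Real.log_div (ne_of_gt hMpos) (two_ne_zero),
    Real.log_mul (ne_of_gt hν) (by positivity : (1+2*ε : ℝ) ≠ 0),
    hm]
  field_simp
  ring

lemma main_eps (ν θ ε : ℝ) (hν : 0 < ν) (hθ0 : 0 < θ) (hθ1 : θ < 1) (hε : 0 < ε) :
    Tendsto (fun n : ℕ => (1/(n:ℝ)) * Real.log ((n.choose ⌊(n:ℝ)*θ⌋₊ : ℝ) *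
      ((Real.pi ^ ((n:ℝ)/2) / Real.Gamma ((n:ℝ)/2+1)) /
        (Real.pi ^ (((n - ⌊(n:ℝ)*θ⌋₊ : ℕ):ℝ)/2) /
          Real.Gamma (((n - ⌊(n:ℝ)*θ⌋₊ : ℕ):ℝ)/2+1))) *
      (Real.sqrt ((n:ℝ)*ν*(1+2*ε))) ^ ⌊(n:ℝ)*θ⌋₊)) atTop
      (𝓝 (gfun (Real.log 2 + Real.log Real.pi + 1 + Real.log (ν*(1+2*ε))) θ)) := by
  have hj : Tendsto (fun n : ℕ => ((⌊(n:ℝ)*θ⌋₊ : ℕ) : ℝ)/n) atTop (𝓝 θ) := by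
    have h0 := (tendsto_nat_floor_mul_div_atTop (R := ℝ) hθ0.le).comp
      (tendsto_natCast_atTop_atTop (R := ℝ))
    apply h0.congr
    intro n
    simp [Function.comp, mul_comm]
  have hjle : ∀ n : ℕ, ⌊(n:ℝ)*θ⌋₊ ≤ n := by
    intro n
    have h1 : ((⌊(n:ℝ)*θ⌋₊ : ℕ):ℝ) ≤ (n:ℝ)*θ := Nat.floor_le (by positivity)
    have h2 : (n:ℝ)*θ ≤ n := by nlinarith [Nat.cast_nonneg (α := ℝ) n]
    exact_mod_cast h1.trans h2
  have hm : Tendsto (fun n : ℕ => ((n - ⌊(n:ℝ)*θ⌋₊ : ℕ) : ℝ)/n) atTop (𝓝 (1 - θ)) := by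
    have := (tendsto_const_nhds (x := (1:ℝ)) (f := atTop (α := ℕ))).sub hj
    apply this.congr'
    filter_upwards [eventually_ge_atTop 1] with n hn
    have hn0 : (n:ℝ) ≠ 0 := Nat.cast_ne_zero.2 (by omega)
    have hcast : ((n - ⌊(n:ℝ)*θ⌋₊ : ℕ) : ℝ) = (n:ℝ) - ((⌊(n:ℝ)*θ⌋₊ : ℕ):ℝ) := by
      push_cast [Nat.cast_sub (hjle n)]; ring
    rw [hcast]; field_simp
  have hjev : ∀ᶠ n : ℕ in atTop, 1 ≤ ⌊(n:ℝ)*θ⌋₊ := by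
    filter_upwards [eventually_ge_atTop ⌈1/θ⌉₊] with n hn
    have h1 : (1:ℝ)/θ ≤ n := Nat.ceil_le.1 hn
    have h2 : (1:ℝ) ≤ (n:ℝ)*θ := by rw [div_le_iff₀ hθ0] at h1; linarith
    exact Nat.le_floor (by exact_mod_cast h2)
  have hmev : ∀ᶠ n : ℕ in atTop, ⌊(n:ℝ)*θ⌋₊ + 1 ≤ n := by
    have h1θ : 0 < 1 - θ := by linarith
    filter_upwards [eventually_ge_atTop ⌈1/(1-θ)⌉₊] with n hn
    have h1 : (1:ℝ)/(1-θ) ≤ n := Nat.ceil_le.1 hn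
    have h2 : (1:ℝ) ≤ (n:ℝ)*(1-θ) := by rw [div_le_iff₀ h1θ] at h1; linarith
    have h3 : ((⌊(n:ℝ)*θ⌋₊ : ℕ):ℝ) ≤ (n:ℝ)*θ := Nat.floor_le (by positivity)
    have : ((⌊(n:ℝ)*θ⌋₊ : ℕ):ℝ) + 1 ≤ (n:ℝ) := by nlinarith
    exact_mod_cast this
  have hgt : Tendsto (fun n : ℕ =>
      gfun (Real.log 2 + Real.log Real.pi + 1 + Real.log (ν*(1+2*ε)))
        (((⌊(n:ℝ)*θ⌋₊ : ℕ) : ℝ)/n)) atTop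
      (𝓝 (gfun (Real.log 2 + Real.log Real.pi + 1 + Real.log (ν*(1+2*ε))) θ)) :=
    (gfun_contAt _ θ hθ0 hθ1).tendsto.comp hj
  have hid : Tendsto (fun n : ℕ => ((n:ℝ))/n) atTop (𝓝 1) := by
    apply tendsto_const_nhds.congr'
    filter_upwards [eventually_ge_atTop 1] with n hn
    have hn0 : (n:ℝ) ≠ 0 := Nat.cast_ne_zero.2 (by omega)
    field_simp
  have hE1 := tendsto_E_comp (fun n => n) 1 one_pos hid
  have hE2 := tendsto_E_comp (fun n => ⌊(n:ℝ)*θ⌋₊) θ hθ0 hj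
  have hE3 := tendsto_E_comp (fun n => n - ⌊(n:ℝ)*θ⌋₊) (1-θ) (by linarith) hm
  have hG1 := tendsto_EG_comp (fun n => n) 1 one_pos hid
  have hG2 := tendsto_EG_comp (fun n => n - ⌊(n:ℝ)*θ⌋₊) (1-θ) (by linarith) hm
  have hsum := ((((hgt.add hE1).sub hE2).sub hE3).sub hG1).add hG2
  simp only [add_zero, sub_zero] at hsum
  apply hsum.congr'
  filter_upwards [hjev, hmev, eventually_ge_atTop 1] with n hj1 hm1 hn1
  exact (identity_step ν θ ε hν hε n ⌊(n:ℝ)*θ⌋₊ hn1 hj1 hm1).symm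


/-- For the Gaussian typical set, the ball `B_n(√(nν(1+2ε)))` has
`j`-th intrinsic volume `C(n,j) (ω_n/ω_{n-j}) (nν(1+2ε))^{j/2}`, and the iterated
limit of `(1/n) log V_{⌊nθ⌋}` as `n → ∞` and then `ε → 0⁺` equals
`H(θ) + (θ/2) log(2πeν) + ((1-θ)/2) log(1-θ)`. -/
theorem gaussian_intrinsic_entropy
    (ν θ : ℝ) (hν : 0 < ν) (hθ : θ ∈ Set.Ioo (0 : ℝ) 1)
    (ω : ℕ → ℝ)
    (hω : ∀ i : ℕ, ω i = Real.pi ^ ((i : ℝ) / 2) / Real.Gamma ((i : ℝ) / 2 + 1))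
    (V : ℕ → ℕ → ℝ → ℝ)
    (hV : ∀ (n j : ℕ) (r : ℝ), V n j r = (n.choose j : ℝ) * (ω n / ω (n - j)) * r ^ j)
    (H : ℝ → ℝ)
    (hH : ∀ x : ℝ, H x = -x * Real.log x - (1 - x) * Real.log (1 - x)) :
    ∃ L : ℝ → ℝ,
      (∀ ε : ℝ, 0 < ε →
        Tendsto (fun n : ℕ =>
            (1 / (n : ℝ)) *
              Real.log (V n ⌊(n : ℝ) * θ⌋₊ (Real.sqrt ((n : ℝ) * ν * (1 + 2 * ε)))))
          atTop (𝓝 (L ε))) ∧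
      Tendsto L (𝓝[>] 0)
        (𝓝 (H θ + θ / 2 * Real.log (2 * Real.pi * Real.exp 1 * ν) +
              (1 - θ) / 2 * Real.log (1 - θ))) := by
  obtain ⟨hθ0, hθ1⟩ := hθ
  refine ⟨fun ε => H θ + θ / 2 * Real.log (2 * Real.pi * Real.exp 1 * ν * (1 + 2 * ε)) +
      (1 - θ) / 2 * Real.log (1 - θ), ?_, ?_⟩
  · intro ε hε
    have hmain := main_eps ν θ ε hν hθ0 hθ1 hε
    have hval : gfun (Real.log 2 + Real.log Real.pi + 1 + Real.log (ν*(1+2*ε))) θ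
        = H θ + θ / 2 * Real.log (2 * Real.pi * Real.exp 1 * ν * (1 + 2 * ε)) +
          (1 - θ) / 2 * Real.log (1 - θ) := by
      have he : (0:ℝ) < Real.exp 1 := Real.exp_pos 1
      have hpi : (0:ℝ) < Real.pi := Real.pi_pos
      have hsplit : Real.log (2 * Real.pi * Real.exp 1 * ν * (1 + 2 * ε))
          = Real.log 2 + Real.log Real.pi + 1 + Real.log ν + Real.log (1 + 2 * ε) := by
        rw [Real.log_mul (by positivity) (by positivity : (1+2*ε:ℝ) ≠ 0),
          Real.log_mul (by positivity) (ne_of_gt hν),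
          Real.log_mul (by positivity) (ne_of_gt he),
          Real.log_mul (by positivity) (ne_of_gt hpi),
          Real.log_exp]
      have hsplit2 : Real.log (ν * (1 + 2 * ε)) = Real.log ν + Real.log (1 + 2 * ε) :=
        Real.log_mul (ne_of_gt hν) (by positivity : (1+2*ε:ℝ) ≠ 0)
      rw [gfun, hH, hsplit, hsplit2]
      ring
    apply Tendsto.congr _ (hval ▸ hmain)
    intro n
    rw [hV, hω, hω]
  · have hC : (0:ℝ) < 2 * Real.pi * Real.exp 1 * ν := by positivity
    have h1 : Tendsto (fun ε : ℝ => 2 * Real.pi * Real.exp 1 * ν * (1 + 2 * ε)) (𝓝 0)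
        (𝓝 (2 * Real.pi * Real.exp 1 * ν)) := by
      have hcont : Continuous fun ε : ℝ => 2 * Real.pi * Real.exp 1 * ν * (1 + 2 * ε) := by
        continuity
      have := hcont.tendsto 0
      simpa using this
    have h2 := h1.log (ne_of_gt hC)
    have h3 := ((tendsto_const_nhds (x := H θ) (f := 𝓝 (0:ℝ))).add
      (h2.const_mul (θ/2))).add (tendsto_const_nhds (x := (1-θ)/2 * Real.log (1-θ)))
    exact h3.mono_left (nhdsWithin_le_nhds (s := Set.Ioi (0:ℝ)))
end

section
/- Let X ⊆ ℝⁿ be compact convex, and suppose the Loomis–Whitney-type inequality V_m(X) ≤ (1/(n−m)) ∑_{j=1}^n V_m(X|{j}^c) holds together with equality of all (n−1)-codimension-1 projection intrinsic volumes by symmetry (as holds for typical sets). Then iterating yields V_m(X) ≤ C(n,m) · V_m(X | {1,...,m}) = C(n,m) · |X | {1,...,m}|, where |·| denotes m-dimensional volume of the projection onto the first m coordinates. -/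
open scoped BigOperators

lemma choose_key (k m : ℕ) (h : m < k) :
    (k - m) * k.choose m = k * (k - 1).choose m := by
  obtain ⟨j, rfl⟩ : ∃ j, k = j + 1 := ⟨k - 1, by omega⟩
  have h1 := Nat.choose_succ_right_eq (j + 1) m
  have h2 := Nat.add_one_mul_choose_eq j m
  simp only [Nat.add_sub_cancel]
  rw [mul_comm, ← h1, h2]

/-- If `V S` denotes the `m`-th intrinsic volume of the projection
of a compact convex set `X ⊆ ℝⁿ` onto the coordinate subspace indexed by
`S ⊆ {1,…,n}`, all projections onto coordinate subsets of equal cardinality have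
equal `m`-th intrinsic volume (symmetry, as for typical sets), and the
Loomis–Whitney-type inequality
`(|S| − m) V(S) ≤ ∑_{j ∈ S} V(S ∖ {j})` holds whenever `|S| > m`, then iterating
yields `V_m(X) = V(univ) ≤ C(n,m) · V(S₀)` for any `S₀` with `|S₀| = m`, where
`V(S₀)` is the `m`-dimensional volume of the projection onto those coordinates. -/
theorem loomis_whitney_iteration
    (n m : ℕ) (hmn : m ≤ n)
    (V : Finset (Fin n) → ℝ)
    (hnonneg : ∀ S, 0 ≤ V S)
    (hsym : ∀ S T : Finset (Fin n), S.card = T.card → V S = V T)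
    (hLW : ∀ S : Finset (Fin n), m < S.card →
      ((S.card : ℝ) - m) * V S ≤ ∑ j ∈ S, V (S.erase j))
    (S₀ : Finset (Fin n)) (hS₀ : S₀.card = m) :
    V Finset.univ ≤ (n.choose m : ℝ) * V S₀ := by
  have key : ∀ k : ℕ, ∀ S : Finset (Fin n), S.card = k → m ≤ k →
      V S ≤ (k.choose m : ℝ) * V S₀ := by
    intro k
    induction k with
    | zero =>
      intro S hSk hmk
      interval_cases m
      simp only [Nat.choose_self, Nat.cast_one, one_mul]
      exact le_of_eq (hsym S S₀ (by omega))
    | succ k ih =>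
      intro S hSk hmk
      rcases eq_or_lt_of_le hmk with heq | hlt
      · rw [← heq, Nat.choose_self, Nat.cast_one, one_mul]
        exact le_of_eq (hsym S S₀ (by omega))
      · have hScard : m < S.card := by omega
        have hSne : S.Nonempty := Finset.card_pos.mp (by omega)
        obtain ⟨j₀, hj₀⟩ := hSne
        have hsum : ∑ j ∈ S, V (S.erase j) = (k + 1 : ℝ) * V (S.erase j₀) := by
          rw [Finset.sum_congr rfl (fun j hj => hsym (S.erase j) (S.erase j₀)
            (by rw [Finset.card_erase_of_mem hj, Finset.card_erase_of_mem hj₀]))]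
          rw [Finset.sum_const, hSk, nsmul_eq_mul]
          push_cast; ring
        have hIH : V (S.erase j₀) ≤ ((k.choose m : ℝ)) * V S₀ := by
          apply ih
          · simp [Finset.card_erase_of_mem hj₀, hSk]
          · omega
        have h1 := hLW S hScard
        rw [hsum, hSk] at h1
        have hpos : (0 : ℝ) < (k + 1 : ℕ) - m := by
          push_cast; have : m < k + 1 := hlt; 
          have : (m : ℝ) < (k : ℝ) + 1 := by exact_mod_cast this
          linarith
        have h2 : ((k + 1 : ℕ) : ℝ) * V (S.erase j₀) ≤
            ((k + 1 : ℕ) : ℝ) * ((k.choose m : ℝ) * V S₀) := by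
          apply mul_le_mul_of_nonneg_left hIH (by positivity)
        have hck := choose_key (k + 1) m hlt
        have hckR : (((k + 1 : ℕ) : ℝ) - m) * ((k + 1).choose m : ℝ) =
            ((k + 1 : ℕ) : ℝ) * (k.choose m : ℝ) := by
          have : (((k + 1) - m) * (k + 1).choose m : ℕ) = ((k + 1) * k.choose m : ℕ) := by
            simpa using hck
          have hc : (((k + 1) - m : ℕ) : ℝ) = ((k + 1 : ℕ) : ℝ) - m := by
            push_cast [Nat.cast_sub (le_of_lt hlt)]; ring
          calc (((k + 1 : ℕ) : ℝ) - m) * ((k + 1).choose m : ℝ)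
              = (((k + 1) - m : ℕ) : ℝ) * ((k + 1).choose m : ℝ) := by rw [hc]
            _ = ((k + 1 : ℕ) : ℝ) * (k.choose m : ℝ) := by exact_mod_cast congrArg Nat.cast this
        have h3 : (((k + 1 : ℕ) : ℝ) - m) * V S ≤
            (((k + 1 : ℕ) : ℝ) - m) * (((k + 1).choose m : ℝ) * V S₀) := by
          calc (((k + 1 : ℕ) : ℝ) - m) * V S
              ≤ ((k + 1 : ℕ) : ℝ) * V (S.erase j₀) := by exact_mod_cast h1
            _ ≤ ((k + 1 : ℕ) : ℝ) * ((k.choose m : ℝ) * V S₀) := h2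
            _ = (((k + 1 : ℕ) : ℝ) - m) * (((k + 1).choose m : ℝ) * V S₀) := by
                rw [← mul_assoc, ← hckR, mul_assoc]
        have hpos' : (0 : ℝ) < ((k + 1 : ℕ) : ℝ) - m := by
          have : (m : ℝ) < (k + 1 : ℕ) := by exact_mod_cast hlt
          linarith
        exact le_of_mul_le_mul_left h3 hpos'
  have := key n Finset.univ (by simp) hmn
  exact this
end

section
/- Fix δ ∈ (0, 1/2) and α > 1. Define μ_n(i) = C(n−1, i) α^i for 0 ≤ i ≤ n−1 and μ_n(n) = δ. Then (μ_n) is a proper super-convolutive sequence, its limit function is Λ(t) = log(1 + αe^t), and the convex conjugate satisfies Λ*(1) = −log α, which is strictly less than −lim_n (1/n) log μ_n(n) = 0. -/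
open Filter
open scoped Topology BigOperators


lemma choose_le_shift (a j c : ℕ) : a.choose j ≤ (a + c).choose (j + c) := by
  induction c with
  | zero => simp
  | succ c ih =>
      have : (a + (c+1)).choose (j + (c+1)) = (a+c).choose (j+c) + (a+c).choose (j+c+1) := by
        show (a + c + 1).choose (j + c + 1) = _
        rw [Nat.choose_succ_succ]
      omega

lemma vandermonde_range (a b i : ℕ) :
    ∑ k ∈ Finset.range (i + 1), a.choose k * b.choose (i - k) = (a + b).choose i := by
  rw [Nat.add_choose_eq, Finset.Nat.sum_antidiagonal_eq_sum_range_succ_mk]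

lemma spike_sum_le {s : Finset ℕ} {h : ℕ → ℝ} {k₀ : ℕ} {M : ℝ} (hM : 0 ≤ M)
    (hb : ∀ k ∈ s, h k ≤ if k = k₀ then M else 0) : ∑ k ∈ s, h k ≤ M := by
  calc ∑ k ∈ s, h k ≤ ∑ k ∈ s, (if k = k₀ then M else 0) := Finset.sum_le_sum hb
    _ = if k₀ ∈ s then M else 0 := Finset.sum_ite_eq' s k₀ fun _ => M
    _ ≤ M := by split <;> simp [hM]

lemma superconv_core (δ α : ℝ) (hδ0 : 0 < δ) (hδ2 : δ < 1/2) (hα : 1 < α) (a b i : ℕ) :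
    ∑ k ∈ Finset.range (i+1),
      (((a.choose k : ℝ) * α ^ k) + (if k = a+1 then δ else 0)) *
      (((b.choose (i-k) : ℝ) * α ^ (i-k)) + (if i-k = b+1 then δ else 0))
    ≤ if i = a+b+2 then δ else
        if i ≤ a+b+1 then (((a+b+1).choose i : ℝ)) * α ^ i else 0 := by
  have hα0 : (0:ℝ) < α := lt_trans one_pos hα
  rcases Nat.eq_zero_or_pos i with rfl | hi
  · simp [Finset.sum_range_one]
  set F : ℕ → ℕ → ℝ := fun c k => (c.choose k : ℝ) * α ^ k with hF
  set G : ℕ → ℕ → ℝ := fun c k => if k = c+1 then δ else 0 with hG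
  have hsplit : ∑ k ∈ Finset.range (i+1),
      (F a k + G a k) * (F b (i-k) + G b (i-k))
      = (∑ k ∈ Finset.range (i+1), F a k * F b (i-k))
        + (∑ k ∈ Finset.range (i+1), F a k * G b (i-k))
        + ((∑ k ∈ Finset.range (i+1), G a k * F b (i-k))
        + (∑ k ∈ Finset.range (i+1), G a k * G b (i-k))) := by
    rw [← Finset.sum_add_distrib, ← Finset.sum_add_distrib, ← Finset.sum_add_distrib]
    exact Finset.sum_congr rfl fun k _ => by ring
  have hff : ∑ k ∈ Finset.range (i+1), F a k * F b (i-k)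
      = (((a+b).choose i : ℝ)) * α ^ i := by
    have hc : ∀ k ∈ Finset.range (i+1), F a k * F b (i-k)
        = ((a.choose k * b.choose (i-k) : ℕ) : ℝ) * α ^ i := by
      intro k hk
      have hk' : k ≤ i := Finset.mem_range_succ_iff.mp hk
      simp only [hF]
      push_cast
      rw [mul_mul_mul_comm, ← pow_add, Nat.add_sub_cancel' hk']
    rw [Finset.sum_congr rfl hc, ← Finset.sum_mul, ← Nat.cast_sum, vandermonde_range]
  have hC' : (0:ℝ) ≤ ((a+b).choose (i-1) : ℝ) := Nat.cast_nonneg _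
  have hM : (0:ℝ) ≤ δ * ((a+b).choose (i-1) : ℝ) * α ^ i := by positivity
  have hfg : ∑ k ∈ Finset.range (i+1), F a k * G b (i-k)
      ≤ δ * ((a+b).choose (i-1) : ℝ) * α ^ i := by
    apply spike_sum_le hM
    intro k hk
    have hk' : k ≤ i := Finset.mem_range_succ_iff.mp hk
    by_cases h : i - k = b + 1
    · have hk0 : k = i - (b+1) := by omega
      have h1 : (a.choose k : ℝ) ≤ ((a+b).choose (i-1) : ℝ) := by
        have := choose_le_shift a k b
        rw [show k + b = i - 1 from by omega] at this
        exact_mod_cast this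
      have h2 : α ^ k ≤ α ^ i := pow_le_pow_right₀ hα.le hk'
      have h3 : (a.choose k : ℝ) * α ^ k ≤ ((a+b).choose (i-1) : ℝ) * α ^ i :=
        mul_le_mul h1 h2 (by positivity) hC'
      rw [if_pos hk0]
      simp only [hF, hG, if_pos h]
      calc (a.choose k : ℝ) * α ^ k * δ ≤ ((a+b).choose (i-1) : ℝ) * α ^ i * δ :=
            mul_le_mul_of_nonneg_right h3 hδ0.le
        _ = δ * ((a+b).choose (i-1) : ℝ) * α ^ i := by ring
    · simp only [hG, if_neg h, mul_zero]
      split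
      · exact hM
      · exact le_rfl
  have hgf : ∑ k ∈ Finset.range (i+1), G a k * F b (i-k)
      ≤ δ * ((a+b).choose (i-1) : ℝ) * α ^ i := by
    apply spike_sum_le hM
    intro k hk
    have hk' : k ≤ i := Finset.mem_range_succ_iff.mp hk
    by_cases h : k = a + 1
    · have h1 : (b.choose (i-k) : ℝ) ≤ ((a+b).choose (i-1) : ℝ) := by
        have := choose_le_shift b (i - k) a
        rw [show i - k + a = i - 1 from by omega, show b + a = a + b from by omega] at this
        exact_mod_cast this
      have h2 : α ^ (i-k) ≤ α ^ i := pow_le_pow_right₀ hα.le (Nat.sub_le _ _)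
      have h3 : (b.choose (i-k) : ℝ) * α ^ (i-k) ≤ ((a+b).choose (i-1) : ℝ) * α ^ i :=
        mul_le_mul h1 h2 (by positivity) hC'
      rw [if_pos h]
      simp only [hF, hG, if_pos h]
      calc δ * ((b.choose (i-k) : ℝ) * α ^ (i-k)) ≤ δ * (((a+b).choose (i-1) : ℝ) * α ^ i) :=
            mul_le_mul_of_nonneg_left h3 hδ0.le
        _ = δ * ((a+b).choose (i-1) : ℝ) * α ^ i := by ring
    · simp only [hG, if_neg h, zero_mul]
      exact le_rfl
  have hgg : ∑ k ∈ Finset.range (i+1), G a k * G b (i-k)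
      ≤ if i = a+b+2 then δ * δ else 0 := by
    apply spike_sum_le
    · split
      · positivity
      · exact le_rfl
    intro k hk
    have hk' : k ≤ i := Finset.mem_range_succ_iff.mp hk
    by_cases h : k = a + 1
    · rw [if_pos h]
      by_cases h2 : i - k = b + 1
      · have hi2 : i = a + b + 2 := by omega
        simp only [hG, if_pos h, if_pos h2, if_pos hi2]
        exact le_rfl
      · simp only [hG, if_pos h, if_neg h2, mul_zero]
        split
        · positivity
        · exact le_rfl
    · simp only [hG, if_neg h, zero_mul]
      exact le_rfl
  calc ∑ k ∈ Finset.range (i+1),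
      (((a.choose k : ℝ) * α ^ k) + (if k = a+1 then δ else 0)) *
      (((b.choose (i-k) : ℝ) * α ^ (i-k)) + (if i-k = b+1 then δ else 0))
      = (∑ k ∈ Finset.range (i+1), F a k * F b (i-k))
        + (∑ k ∈ Finset.range (i+1), F a k * G b (i-k))
        + ((∑ k ∈ Finset.range (i+1), G a k * F b (i-k))
        + (∑ k ∈ Finset.range (i+1), G a k * G b (i-k))) := hsplit
    _ ≤ (((a+b).choose i : ℝ)) * α ^ i
        + δ * ((a+b).choose (i-1) : ℝ) * α ^ i
        + (δ * ((a+b).choose (i-1) : ℝ) * α ^ i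
        + (if i = a+b+2 then δ * δ else 0)) := by
        rw [hff]; exact add_le_add (add_le_add le_rfl hfg) (add_le_add hgf hgg)
    _ ≤ _ := by
        by_cases hi2 : i = a + b + 2
        · subst hi2
          rw [if_pos rfl, if_pos rfl]
          rw [Nat.choose_eq_zero_of_lt (by omega), Nat.choose_eq_zero_of_lt (by omega)]
          push_cast
          nlinarith
        · rw [if_neg hi2, if_neg hi2]
          by_cases hi3 : i ≤ a + b + 1
          · rw [if_pos hi3]
            have hp : (a+b+1).choose i = (a+b).choose (i-1) + (a+b).choose i := by
              obtain ⟨j, rfl⟩ : ∃ j, i = j + 1 := ⟨i - 1, by omega⟩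
              rw [Nat.choose_succ_succ]
              simp [Nat.add_comm]
            rw [hp]
            push_cast
            have hA : (0:ℝ) < α ^ i := pow_pos hα0 i
            have key : 2 * δ * (((a+b).choose (i-1) : ℝ) * α ^ i)
                ≤ 1 * (((a+b).choose (i-1) : ℝ) * α ^ i) :=
              mul_le_mul_of_nonneg_right (by linarith) (by positivity)
            linarith
          · rw [if_neg hi3]
            rw [Nat.choose_eq_zero_of_lt (by omega), Nat.choose_eq_zero_of_lt (by omega)]
            simp

/-- For `δ ∈ (0,1/2)`, `α > 1`, and
`μ n i = C(n−1,i) αⁱ` for `i ≤ n−1`, `μ n n = δ`: the sequence `(μ n)` is a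
proper super-convolutive sequence, its limit function is
`Λ(t) = log(1 + α eᵗ)`, and `Λ*(1) = −log α < 0 = lim (1/n) log μ n n`,
showing that the endpoint inequality for the conjugate can be strict. -/
theorem strict_inequality_example
    (δ α : ℝ) (hδ : δ ∈ Set.Ioo (0 : ℝ) (1 / 2)) (hα : 1 < α)
    (μ : ℕ → ℕ → ℝ)
    (hμ : ∀ n i : ℕ, 1 ≤ n → μ n i =
      if i = n then δ else if i ≤ n - 1 then ((n - 1).choose i : ℝ) * α ^ i else 0) :
    (∀ n : ℕ, 1 ≤ n → 0 < μ n 0 ∧ 0 < μ n n) ∧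
    (∀ m n : ℕ, 1 ≤ m → 1 ≤ n → ∀ i : ℕ,
      ∑ k ∈ Finset.range (i + 1), μ m k * μ n (i - k) ≤ μ (m + n) i) ∧
    (∀ t : ℝ,
      Tendsto (fun n : ℕ =>
          (1 / (n : ℝ)) * Real.log (∑ j ∈ Finset.range (n + 1), μ n j * Real.exp (j * t)))
        atTop (𝓝 (Real.log (1 + α * Real.exp t)))) ∧
    (⨆ t : ℝ, (t - Real.log (1 + α * Real.exp t))) = -Real.log α ∧
    Tendsto (fun n : ℕ => (1 / (n : ℝ)) * Real.log (μ n n)) atTop (𝓝 0) ∧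
    -Real.log α < 0 := by
  obtain ⟨hδ0, hδ2⟩ := hδ
  have hα0 : (0:ℝ) < α := lt_trans one_pos hα
  have hdecomp : ∀ (c k : ℕ), μ (c+1) k
      = ((c.choose k : ℝ) * α ^ k) + (if k = c+1 then δ else 0) := by
    intro c k
    rw [hμ (c+1) k (by omega)]
    simp only [Nat.add_sub_cancel]
    split_ifs with h1 h2
    · rw [Nat.choose_eq_zero_of_lt (by omega)]
      simp
    · rw [add_zero]
    · rw [Nat.choose_eq_zero_of_lt (by omega)]
      simp
  refine ⟨?_, ?_, ?_, ?_, ?_, ?_⟩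
  · -- positivity at endpoints
    intro n hn
    obtain ⟨c, rfl⟩ : ∃ c, n = c + 1 := ⟨n - 1, by omega⟩
    constructor
    · rw [hdecomp]
      simp only [Nat.choose_zero_right, Nat.cast_one, pow_zero, mul_one]
      rw [if_neg (by omega)]
      norm_num
    · rw [hdecomp, Nat.choose_eq_zero_of_lt (by omega), if_pos rfl]
      simpa using hδ0
  · -- super-convolutivity
    intro m n hm hn i
    obtain ⟨a, rfl⟩ : ∃ a, m = a + 1 := ⟨m - 1, by omega⟩
    obtain ⟨b, rfl⟩ : ∃ b, n = b + 1 := ⟨n - 1, by omega⟩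
    have habn : a + 1 + (b + 1) = (a + b + 1) + 1 := by ring
    have htarget : μ (a+1+(b+1)) i
        = if i = a+b+2 then δ else
            if i ≤ a+b+1 then (((a+b+1).choose i : ℝ)) * α ^ i else 0 := by
      rw [habn, hdecomp]
      by_cases h1 : i = a+b+2
      · rw [if_pos (by omega), if_pos h1, Nat.choose_eq_zero_of_lt (by omega)]
        simp
      · rw [if_neg (by omega), if_neg h1, add_zero]
        by_cases h2 : i ≤ a+b+1
        · rw [if_pos h2]
        · rw [if_neg h2, Nat.choose_eq_zero_of_lt (by omega)]
          simp
    calc ∑ k ∈ Finset.range (i + 1), μ (a+1) k * μ (b+1) (i - k)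
        = ∑ k ∈ Finset.range (i+1),
          (((a.choose k : ℝ) * α ^ k) + (if k = a+1 then δ else 0)) *
          (((b.choose (i-k) : ℝ) * α ^ (i-k)) + (if i-k = b+1 then δ else 0)) :=
          Finset.sum_congr rfl fun k _ => by rw [hdecomp, hdecomp]
      _ ≤ if i = a+b+2 then δ else
            if i ≤ a+b+1 then (((a+b+1).choose i : ℝ)) * α ^ i else 0 :=
          superconv_core δ α hδ0 hδ2 hα a b i
      _ = μ (a+1+(b+1)) i := htarget.symm
  · -- the limit function
    intro t
    set x : ℝ := α * Real.exp t with hx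
    have hx0 : 0 < x := by positivity
    have h1x : (0:ℝ) < 1 + x := by positivity
    have het : Real.exp t ≤ 1 + x := by
      have : Real.exp t ≤ α * Real.exp t := le_mul_of_one_le_left (Real.exp_pos t).le hα.le
      linarith
    have hsum : ∀ m : ℕ, ∑ j ∈ Finset.range (m+1+1), μ (m+1) j * Real.exp (j * t)
        = (1 + x) ^ m + δ * Real.exp ((m+1 : ℕ) * t) := by
      intro m
      rw [Finset.sum_range_succ]
      have hlast : μ (m+1) (m+1) = δ := by
        rw [hdecomp, Nat.choose_eq_zero_of_lt (by omega), if_pos rfl]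
        simp
      rw [hlast]
      congr 1
      have hstep : ∀ j ∈ Finset.range (m+1),
          μ (m+1) j * Real.exp (j * t) = x ^ j * 1 ^ (m - j) * (m.choose j : ℝ) := by
        intro j hj
        have hj' : j ≤ m := Finset.mem_range_succ_iff.mp hj
        rw [hdecomp, if_neg (by omega), add_zero, one_pow, hx, mul_pow,
          ← Real.exp_nat_mul]
        ring
      rw [Finset.sum_congr rfl hstep, ← add_pow]
      rw [add_comm x 1]
    have key : Tendsto (fun m : ℕ =>
        (1 / ((m+1 : ℕ) : ℝ)) * Real.log (∑ j ∈ Finset.range (m+1+1),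
          μ (m+1) j * Real.exp (j * t))) atTop (𝓝 (Real.log (1 + x))) := by
      have heq : (fun m : ℕ =>
          (1 / ((m+1 : ℕ) : ℝ)) * Real.log (∑ j ∈ Finset.range (m+1+1),
            μ (m+1) j * Real.exp (j * t)))
          = fun m : ℕ => (1 / ((m : ℝ) + 1)) *
            Real.log ((1 + x) ^ m + δ * Real.exp ((m+1 : ℕ) * t)) := by
        funext m
        rw [hsum m]
        push_cast
        ring_nf
      rw [heq]
      set L : ℝ := Real.log (1 + x) with hL
      have hSpos : ∀ m : ℕ, (0:ℝ) < (1 + x) ^ m + δ * Real.exp ((m+1 : ℕ) * t) := by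
        intro m; positivity
      have hlow : ∀ m : ℕ, (1 / ((m : ℝ) + 1)) * ((m : ℝ) * L)
          ≤ (1 / ((m : ℝ) + 1)) *
            Real.log ((1 + x) ^ m + δ * Real.exp ((m+1 : ℕ) * t)) := by
        intro m
        apply mul_le_mul_of_nonneg_left _ (by positivity)
        rw [hL, ← Real.log_pow]
        apply Real.log_le_log (by positivity)
        have : (0:ℝ) ≤ δ * Real.exp ((m+1 : ℕ) * t) := by positivity
        linarith
      have hup : ∀ m : ℕ, (1 / ((m : ℝ) + 1)) *
            Real.log ((1 + x) ^ m + δ * Real.exp ((m+1 : ℕ) * t))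
          ≤ (1 / ((m : ℝ) + 1)) * (Real.log (1 + δ * Real.exp t) + (m : ℝ) * L) := by
        intro m
        apply mul_le_mul_of_nonneg_left _ (by positivity)
        have hprod : (1 + x) ^ m + δ * Real.exp ((m+1 : ℕ) * t)
            ≤ (1 + δ * Real.exp t) * (1 + x) ^ m := by
          have h1 : Real.exp ((m+1 : ℕ) * t) = Real.exp t * (Real.exp t) ^ m := by
            rw [← Real.exp_nat_mul]
            push_cast
            rw [← Real.exp_add]
            ring_nf
          have h2 : (Real.exp t) ^ m ≤ (1 + x) ^ m :=
            pow_le_pow_left₀ (Real.exp_pos t).le het m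
          have h3 : δ * Real.exp ((m+1:ℕ) * t) ≤ δ * Real.exp t * (1 + x) ^ m := by
            rw [h1]
            calc δ * (Real.exp t * (Real.exp t) ^ m)
                ≤ δ * (Real.exp t * (1 + x) ^ m) := by
                  apply mul_le_mul_of_nonneg_left _ hδ0.le
                  exact mul_le_mul_of_nonneg_left h2 (Real.exp_pos t).le
              _ = δ * Real.exp t * (1 + x) ^ m := by ring
          nlinarith [pow_pos h1x m]
        calc Real.log ((1 + x) ^ m + δ * Real.exp ((m+1 : ℕ) * t))
            ≤ Real.log ((1 + δ * Real.exp t) * (1 + x) ^ m) :=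
              Real.log_le_log (hSpos m) hprod
          _ = Real.log (1 + δ * Real.exp t) + (m : ℝ) * L := by
              rw [Real.log_mul (by positivity) (by positivity), hL, Real.log_pow]
      have hdiv : Tendsto (fun m : ℕ => (m : ℝ) / ((m : ℝ) + 1)) atTop (𝓝 1) :=
        tendsto_natCast_div_add_atTop (1 : ℝ)
      have hinv : Tendsto (fun m : ℕ => 1 / ((m : ℝ) + 1)) atTop (𝓝 0) :=
        tendsto_one_div_add_atTop_nhds_zero_nat
      have hlo_t : Tendsto (fun m : ℕ => (1 / ((m : ℝ) + 1)) * ((m : ℝ) * L))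
          atTop (𝓝 L) := by
        have := hdiv.mul_const L
        rw [one_mul] at this
        refine this.congr fun m => by ring
      have hup_t : Tendsto (fun m : ℕ => (1 / ((m : ℝ) + 1)) *
          (Real.log (1 + δ * Real.exp t) + (m : ℝ) * L)) atTop (𝓝 L) := by
        have h1 := (hinv.mul_const (Real.log (1 + δ * Real.exp t))).add hlo_t
        rw [zero_mul, zero_add] at h1
        refine h1.congr fun m => by ring
      exact tendsto_of_tendsto_of_tendsto_of_le_of_le hlo_t hup_t hlow hup
    exact (tendsto_add_atTop_iff_nat (f := fun n : ℕ =>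
      (1 / (n : ℝ)) * Real.log (∑ j ∈ Finset.range (n + 1), μ n j * Real.exp (j * t))) 1).mp key
  · -- the supremum
    have hkey : ∀ t : ℝ, t - Real.log (1 + α * Real.exp t)
        = -Real.log (Real.exp (-t) + α) := by
      intro t
      have hne : (0:ℝ) < Real.exp (-t) + α := by positivity
      have hfact : 1 + α * Real.exp t = Real.exp t * (Real.exp (-t) + α) := by
        rw [mul_add, ← Real.exp_add, add_neg_cancel, Real.exp_zero]
        ring
      rw [hfact, Real.log_mul (Real.exp_ne_zero t) hne.ne', Real.log_exp]
      ring
    have hmono : Monotone (fun t : ℝ => -Real.log (Real.exp (-t) + α)) := by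
      intro s u h
      simp only [neg_le_neg_iff]
      apply Real.log_le_log (by positivity)
      have : Real.exp (-u) ≤ Real.exp (-s) := Real.exp_le_exp.mpr (by linarith)
      linarith
    have htend : Tendsto (fun t : ℝ => -Real.log (Real.exp (-t) + α))
        atTop (𝓝 (-Real.log α)) := by
      have h1 : Tendsto (fun t : ℝ => Real.exp (-t) + α) atTop (𝓝 (0 + α)) := by
        exact (Real.tendsto_exp_atBot.comp tendsto_neg_atTop_atBot).add tendsto_const_nhds
      rw [zero_add] at h1
      exact (((Real.continuousAt_log hα0.ne').tendsto).comp h1).neg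
    have hlub : IsLUB (Set.range fun t : ℝ => -Real.log (Real.exp (-t) + α))
        (-Real.log α) := isLUB_of_tendsto_atTop hmono htend
    calc (⨆ t : ℝ, (t - Real.log (1 + α * Real.exp t)))
        = ⨆ t : ℝ, -Real.log (Real.exp (-t) + α) := by
          exact congrArg _ (funext hkey)
      _ = -Real.log α := hlub.ciSup_eq
  · -- limit of (1/n) log μ n n
    have hconst : Tendsto (fun n : ℕ => (1 / (n : ℝ)) * Real.log δ) atTop (𝓝 0) := by
      have := tendsto_one_div_atTop_nhds_zero_nat.mul_const (Real.log δ)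
      rwa [zero_mul] at this
    apply hconst.congr'
    filter_upwards [eventually_ge_atTop 1] with n hn
    rw [hμ n n hn, if_pos rfl]
  · simpa using Real.log_pos hα
end
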